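/- arXiv:2501.13225 — 5 statements merged into one kernel-verified Lean document; each statement's English description precedes it below -/
import Mathlib

section
/- Let $\Delta \in (0,1]$ and $\omega(w) = \zeta(w^{-2})^{-1/2}$ with $\zeta(z) = z - \Delta\frac{1}{\pi}(\sqrt{1-(1-2z)^2} - (1-2z)\arccos(1-2z))$. Then there exists a strictly decreasing function $\varepsilon : (1,\infty) \to (0,\infty)$ such that $\omega(w) = w + \Delta\frac{4}{3\pi} + \frac{3}{2}(\Delta\frac{4}{3\pi})^2 w^{-1} + \Delta\,\varepsilon(w)\, w^{-2}$ for all $w \in (1,\infty)$. -/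
open Real

/-- The squared cosine distance map. -/
noncomputable def zeta (Δ z : ℝ) : ℝ :=
  z - Δ * (1 / π) *
    (Real.sqrt (1 - (1 - 2 * z) ^ 2) - (1 - 2 * z) * Real.arccos (1 - 2 * z))

/-- The inverse cosine distance map `ω(w) = ζ(w⁻²)^{-1/2}`. -/
noncomputable def omegaMap (Δ w : ℝ) : ℝ := (Real.sqrt (zeta Δ ((w ^ 2)⁻¹)))⁻¹

open Set

noncomputable def omAuxR (s : ℝ) : ℝ := Real.sqrt (1 - s^2)

lemma omAuxR_pos {s : ℝ} (h1 : -1 < s) (h2 : s < 1) : 0 < omAuxR s :=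
  Real.sqrt_pos.2 (by nlinarith)

lemma omAuxR_sq {s : ℝ} (h1 : -1 < s) (h2 : s < 1) : (omAuxR s)^2 = 1 - s^2 :=
  Real.sq_sqrt (by nlinarith)

lemma hasDerivAt_omAuxR {s : ℝ} (h1 : -1 < s) (h2 : s < 1) :
    HasDerivAt omAuxR (-s / omAuxR s) s := by
  have h : HasDerivAt (fun x : ℝ => 1 - x^2) (-(2*s^(2-1))) s :=
    (hasDerivAt_pow 2 s).const_sub 1
  have h2' : (1 : ℝ) - s^2 ≠ 0 := by nlinarith
  have := h.sqrt h2'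
  refine this.congr_deriv (Eq.symm ?_)
  simp [omAuxR]
  ring

lemma hasDerivAt_arcsin' {s : ℝ} (h1 : -1 < s) (h2 : s < 1) :
    HasDerivAt Real.arcsin (1 / omAuxR s) s :=
  Real.hasDerivAt_arcsin h1.ne' h2.ne

lemma omAux_strictMonoOn_Ioo {f f' : ℝ → ℝ} {a b : ℝ}
    (hd : ∀ x ∈ Set.Ioo a b, HasDerivAt f (f' x) x)
    (hp : ∀ x ∈ Set.Ioo a b, 0 < f' x) :
    StrictMonoOn f (Set.Ioo a b) := by
  apply strictMonoOn_of_deriv_pos (convex_Ioo a b)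
    (fun x hx => (hd x hx).continuousAt.continuousWithinAt)
  intro x hx
  rw [interior_Ioo] at hx
  rw [(hd x hx).deriv]
  exact hp x hx

lemma omAux_pos_Ioo {f f' : ℝ → ℝ} {b : ℝ}
    (hc : ContinuousOn f (Set.Ico 0 b))
    (hd : ∀ x ∈ Set.Ioo (0:ℝ) b, HasDerivAt f (f' x) x)
    (hp : ∀ x ∈ Set.Ioo (0:ℝ) b, 0 < f' x) (h0 : f 0 = 0) :
    ∀ x ∈ Set.Ioo (0:ℝ) b, 0 < f x := by
  have hm : StrictMonoOn f (Set.Ico 0 b) := by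
    apply strictMonoOn_of_deriv_pos (convex_Ico 0 b) hc
    intro x hx
    rw [interior_Ico] at hx
    rw [(hd x hx).deriv]
    exact hp x hx
  intro x hx
  have h0b : (0:ℝ) < b := lt_trans hx.1 hx.2
  have := hm ⟨le_refl 0, h0b⟩ ⟨hx.1.le, hx.2⟩ hx.1
  rwa [h0] at this

lemma omAux_mul_mono {s : Set ℝ} {f g : ℝ → ℝ}
    (hf : StrictMonoOn f s) (hg : StrictMonoOn g s)
    (hf0 : ∀ x ∈ s, 0 < f x) (hg0 : ∀ x ∈ s, 0 < g x) :
    StrictMonoOn (fun x => f x * g x) s := by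
  intro a ha b hb hab
  have h1 := hf ha hb hab
  have h2 := hg ha hb hab
  have := hf0 a ha
  have := hg0 a ha
  dsimp only
  nlinarith

noncomputable def omAuxD (s : ℝ) : ℝ := s / omAuxR s - Real.arcsin s
noncomputable def omAuxK (s : ℝ) : ℝ := s / omAuxR s + 2*s - 3*Real.arcsin s

lemma omAux_contOn_div_r {b : ℝ} (hb : b ≤ 1) :
    ContinuousOn (fun s : ℝ => s / omAuxR s) (Set.Ico 0 b) := by
  apply ContinuousOn.div continuousOn_id
  · exact (Real.continuous_sqrt.comp (by continuity)).continuousOn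
  · intro x hx
    have : (0:ℝ) < omAuxR x := omAuxR_pos (by linarith [hx.1, hx.2]) (by linarith [hx.1, hx.2])
    exact this.ne'

lemma hasDerivAt_omAuxD {s : ℝ} (hs : s ∈ Set.Ioo (0:ℝ) 1) :
    HasDerivAt omAuxD (s^2 / (omAuxR s)^3) s := by
  obtain ⟨h0, h1⟩ := hs
  have hm1 : (-1:ℝ) < s := by linarith
  have hr := omAuxR_pos hm1 h1
  have hr2 := omAuxR_sq hm1 h1
  have hdiv : HasDerivAt (fun x => x / omAuxR x)
      ((1 * omAuxR s - s * (-s / omAuxR s)) / (omAuxR s)^2) s :=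
    (hasDerivAt_id s).div (hasDerivAt_omAuxR hm1 h1) hr.ne'
  have := hdiv.sub (hasDerivAt_arcsin' hm1 h1)
  refine this.congr_deriv (Eq.symm ?_)
  field_simp
  nlinarith [hr2, hr, sq_nonneg s]

lemma omAuxD_pos {s : ℝ} (hs : s ∈ Set.Ioo (0:ℝ) 1) : 0 < omAuxD s := by
  refine omAux_pos_Ioo (f' := fun s => s^2 / (omAuxR s)^3) ?_ (fun x hx => hasDerivAt_omAuxD hx)
    (fun x hx => ?_) ?_ s hs
  · exact (omAux_contOn_div_r le_rfl).sub Real.continuous_arcsin.continuousOn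
  · have hr := omAuxR_pos (by linarith [hx.1]) hx.2
    have hx0 : x ≠ 0 := ne_of_gt hx.1
    positivity
  · simp [omAuxD, omAuxR]

lemma hasDerivAt_omAuxK {s : ℝ} (hs : s ∈ Set.Ioo (0:ℝ) 1) :
    HasDerivAt omAuxK ((1 + 2*(omAuxR s)^3 - 3*(omAuxR s)^2) / (omAuxR s)^3) s := by
  obtain ⟨h0, h1⟩ := hs
  have hm1 : (-1:ℝ) < s := by linarith
  have hr := omAuxR_pos hm1 h1
  have hr2 := omAuxR_sq hm1 h1
  have hdiv : HasDerivAt (fun x => x / omAuxR x)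
      ((1 * omAuxR s - s * (-s / omAuxR s)) / (omAuxR s)^2) s :=
    (hasDerivAt_id s).div (hasDerivAt_omAuxR hm1 h1) hr.ne'
  have hlin : HasDerivAt (fun x : ℝ => 2*x) 2 s := by
    simpa using (hasDerivAt_id s).const_mul (2:ℝ)
  have := (hdiv.add hlin).sub ((hasDerivAt_arcsin' hm1 h1).const_mul 3)
  refine this.congr_deriv (Eq.symm ?_)
  field_simp
  linear_combination (-1) * hr2

lemma omAuxK_pos {s : ℝ} (hs : s ∈ Set.Ioo (0:ℝ) 1) : 0 < omAuxK s := by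
  refine omAux_pos_Ioo (f' := fun s => (1 + 2*(omAuxR s)^3 - 3*(omAuxR s)^2) / (omAuxR s)^3)
    ?_ (fun x hx => hasDerivAt_omAuxK hx) (fun x hx => ?_) ?_ s hs
  · unfold omAuxK
    exact ((omAux_contOn_div_r le_rfl).add
      (continuous_const.mul continuous_id).continuousOn).sub
      (continuous_const.mul Real.continuous_arcsin).continuousOn
  · have hr := omAuxR_pos (by linarith [hx.1]) hx.2
    have hrlt : omAuxR x < 1 := by
      have := omAuxR_sq (by linarith [hx.1]) hx.2
      nlinarith [hx.1]
    have hnum : 0 < 1 + 2*(omAuxR x)^3 - 3*(omAuxR x)^2 := by nlinarith [sq_nonneg (1 - omAuxR x)]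
    positivity
  · simp [omAuxK, omAuxR]

lemma omAux_arcsin_gt {s : ℝ} (hs : s ∈ Set.Ioo (0:ℝ) 1) : s < Real.arcsin s := by
  have h := omAux_pos_Ioo (f := fun s => Real.arcsin s - s) (f' := fun s => 1 / omAuxR s - 1)
    (Real.continuous_arcsin.continuousOn.sub continuousOn_id)
    (fun x hx => (hasDerivAt_arcsin' (by linarith [hx.1]) hx.2).sub (hasDerivAt_id x))
    (fun x hx => ?_) (by simp) s hs
  · simpa using h
  · have hr := omAuxR_pos (by linarith [hx.1]) hx.2
    have hrlt : omAuxR x < 1 := by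
      have := omAuxR_sq (by linarith [hx.1]) hx.2
      nlinarith [hx.1]
    rw [sub_pos, lt_div_iff₀ hr]
    linarith

noncomputable def omAuxN (s : ℝ) : ℝ := s * omAuxR s - (1 - 2*s^2) * Real.arcsin s

lemma omAuxN_cont : ContinuousOn omAuxN (Set.Icc 0 1) := by
  unfold omAuxN omAuxR
  exact ((continuous_id.mul (Real.continuous_sqrt.comp (by continuity))).sub
    ((by continuity : Continuous fun s : ℝ => 1 - 2*s^2).mul Real.continuous_arcsin)).continuousOn

lemma hasDerivAt_omAuxN {s : ℝ} (hs : s ∈ Set.Ioo (0:ℝ) 1) :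
    HasDerivAt omAuxN (4*s*Real.arcsin s) s := by
  obtain ⟨h0, h1⟩ := hs
  have hm1 : (-1:ℝ) < s := by linarith
  have hr := omAuxR_pos hm1 h1
  have hr2 := omAuxR_sq hm1 h1
  have h1' : HasDerivAt (fun x => x * omAuxR x) (1 * omAuxR s + s * (-s / omAuxR s)) s :=
    (hasDerivAt_id s).mul (hasDerivAt_omAuxR hm1 h1)
  have h2' : HasDerivAt (fun x : ℝ => 1 - 2*x^2) (-(2*(2*s^(2-1)))) s :=
    ((hasDerivAt_pow 2 s).const_mul 2).const_sub 1
  have h3' : HasDerivAt (fun x => (1 - 2*x^2) * Real.arcsin x)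
      ((-(2*(2*s^(2-1)))) * Real.arcsin s + (1 - 2*s^2) * (1 / omAuxR s)) s :=
    h2'.mul (hasDerivAt_arcsin' hm1 h1)
  have := h1'.sub h3'
  refine this.congr_deriv (Eq.symm ?_)
  field_simp
  linear_combination -hr2

lemma omAuxN_pos {s : ℝ} (hs : s ∈ Set.Ioo (0:ℝ) 1) : 0 < omAuxN s := by
  refine omAux_pos_Ioo (f' := fun s => 4*s*Real.arcsin s)
    (omAuxN_cont.mono Set.Ico_subset_Icc_self) (fun x hx => hasDerivAt_omAuxN hx)
    (fun x hx => ?_) ?_ s hs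
  · have := Real.arcsin_pos.2 hx.1
    have := hx.1
    positivity
  · simp [omAuxN, omAuxR]

noncomputable def omAuxM (s : ℝ) : ℝ := 4*s^2*Real.arcsin s - 3*omAuxN s

lemma hasDerivAt_sq_arcsin {s : ℝ} (hs : s ∈ Set.Ioo (0:ℝ) 1) :
    HasDerivAt (fun x => 4*x^2*Real.arcsin x)
      (8*s*Real.arcsin s + 4*s^2/omAuxR s) s := by
  obtain ⟨h0, h1⟩ := hs
  have hm1 : (-1:ℝ) < s := by linarith
  have h1' : HasDerivAt (fun x : ℝ => 4*x^2) (4*(2*s^(2-1))) s :=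
    (hasDerivAt_pow 2 s).const_mul 4
  have := h1'.mul (hasDerivAt_arcsin' hm1 h1)
  refine this.congr_deriv (Eq.symm ?_)
  ring

lemma hasDerivAt_omAuxM {s : ℝ} (hs : s ∈ Set.Ioo (0:ℝ) 1) :
    HasDerivAt omAuxM (4*s*omAuxD s) s := by
  have := (hasDerivAt_sq_arcsin hs).sub ((hasDerivAt_omAuxN hs).const_mul 3)
  refine this.congr_deriv (Eq.symm ?_)
  have hr := omAuxR_pos (by linarith [hs.1]) hs.2
  unfold omAuxD
  field_simp
  ring

lemma omAuxM_pos {s : ℝ} (hs : s ∈ Set.Ioo (0:ℝ) 1) : 0 < omAuxM s := by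
  refine omAux_pos_Ioo (f' := fun s => 4*s*omAuxD s) ?_
    (fun x hx => hasDerivAt_omAuxM hx) (fun x hx => ?_) ?_ s hs
  · unfold omAuxM
    exact (((by continuity : Continuous fun s : ℝ => 4*s^2).mul
      Real.continuous_arcsin).continuousOn).sub (continuousOn_const.mul (omAuxN_cont.mono Set.Ico_subset_Icc_self))
  · have := omAuxD_pos hx
    have := hx.1
    positivity
  · simp [omAuxM, omAuxN, omAuxR]

noncomputable def omAuxP (s : ℝ) : ℝ := omAuxN s - (4/3)*s^3

lemma hasDerivAt_omAuxP {s : ℝ} (hs : s ∈ Set.Ioo (0:ℝ) 1) :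
    HasDerivAt omAuxP (4*s*(Real.arcsin s - s)) s := by
  have h1' : HasDerivAt (fun x : ℝ => (4/3)*x^3) ((4/3)*(3*s^(3-1))) s :=
    (hasDerivAt_pow 3 s).const_mul (4/3)
  have := (hasDerivAt_omAuxN hs).sub h1'
  refine this.congr_deriv (Eq.symm ?_)
  ring

lemma omAuxP_pos {s : ℝ} (hs : s ∈ Set.Ioo (0:ℝ) 1) : 0 < omAuxP s := by
  refine omAux_pos_Ioo (f' := fun s => 4*s*(Real.arcsin s - s)) ?_
    (fun x hx => hasDerivAt_omAuxP hx) (fun x hx => ?_) ?_ s hs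
  · exact (omAuxN_cont.mono Set.Ico_subset_Icc_self).sub (by continuity : Continuous fun s : ℝ => (4/3)*s^3).continuousOn
  · have h1 := omAux_arcsin_gt hx
    have h2 := hx.1
    show 0 < 4*x*(Real.arcsin x - x)
    nlinarith
  · simp [omAuxP, omAuxN, omAuxR]

noncomputable def omAuxKK (s : ℝ) : ℝ := 4*s^2*Real.arcsin s - 4*s^3 - 5*omAuxP s

lemma hasDerivAt_omAuxKK {s : ℝ} (hs : s ∈ Set.Ioo (0:ℝ) 1) :
    HasDerivAt omAuxKK (4*s*omAuxK s) s := by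
  have h1' : HasDerivAt (fun x : ℝ => 4*x^3) (4*(3*s^(3-1))) s :=
    (hasDerivAt_pow 3 s).const_mul 4
  have := ((hasDerivAt_sq_arcsin hs).sub h1').sub ((hasDerivAt_omAuxP hs).const_mul 5)
  refine this.congr_deriv (Eq.symm ?_)
  have hr := omAuxR_pos (by linarith [hs.1]) hs.2
  unfold omAuxK
  field_simp
  ring

lemma omAuxKK_pos {s : ℝ} (hs : s ∈ Set.Ioo (0:ℝ) 1) : 0 < omAuxKK s := by
  refine omAux_pos_Ioo (f' := fun s => 4*s*omAuxK s) ?_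
    (fun x hx => hasDerivAt_omAuxKK hx) (fun x hx => ?_) ?_ s hs
  · unfold omAuxKK omAuxP
    apply ContinuousOn.sub
    apply ContinuousOn.sub
    · exact ((by continuity : Continuous fun s : ℝ => 4*s^2).mul Real.continuous_arcsin).continuousOn
    · exact (by continuity : Continuous fun s : ℝ => 4*s^3).continuousOn
    · exact continuousOn_const.mul ((omAuxN_cont.mono Set.Ico_subset_Icc_self).sub
        (by continuity : Continuous fun s : ℝ => (4/3)*s^3).continuousOn)
  · have := omAuxK_pos hx
    have := hx.1
    positivity
  · simp [omAuxKK, omAuxP, omAuxN, omAuxR]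

noncomputable def omAuxV (s : ℝ) : ℝ := omAuxN s / s^3
noncomputable def omAuxW (s : ℝ) : ℝ := omAuxP s / s^5

lemma omAuxV_mono : StrictMonoOn omAuxV (Set.Ioo (0:ℝ) 1) := by
  apply omAux_strictMonoOn_Ioo (f' := fun s => omAuxM s / s^4)
  · intro x hx
    have hx0 : x ≠ 0 := ne_of_gt hx.1
    have h1' : HasDerivAt (fun x : ℝ => x^3) (3*x^(3-1)) x := hasDerivAt_pow 3 x
    have := (hasDerivAt_omAuxN hx).div h1' (by positivity)
    refine this.congr_deriv (Eq.symm ?_)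
    unfold omAuxM
    field_simp
    ring
  · intro x hx
    have := omAuxM_pos hx
    have hx0 := hx.1
    positivity

lemma omAuxV_pos {s : ℝ} (hs : s ∈ Set.Ioo (0:ℝ) 1) : 0 < omAuxV s := by
  have := omAuxN_pos hs
  have := hs.1
  unfold omAuxV
  positivity

lemma omAuxW_mono : StrictMonoOn omAuxW (Set.Ioo (0:ℝ) 1) := by
  apply omAux_strictMonoOn_Ioo (f' := fun s => omAuxKK s / s^6)
  · intro x hx
    have hx0 : x ≠ 0 := ne_of_gt hx.1
    have h1' : HasDerivAt (fun x : ℝ => x^5) (5*x^(5-1)) x := hasDerivAt_pow 5 x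
    have := (hasDerivAt_omAuxP hx).div h1' (by positivity)
    refine this.congr_deriv (Eq.symm ?_)
    unfold omAuxKK omAuxP
    field_simp
    ring
  · intro x hx
    have := omAuxKK_pos hx
    have hx0 := hx.1
    positivity

lemma omAuxW_pos {s : ℝ} (hs : s ∈ Set.Ioo (0:ℝ) 1) : 0 < omAuxW s := by
  have := omAuxP_pos hs
  have := hs.1
  unfold omAuxW
  positivity

lemma omAuxV_eq {s : ℝ} (hs : s ≠ 0) : omAuxV s = 4/3 + s^2 * omAuxW s := by
  unfold omAuxV omAuxW omAuxP
  field_simp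
  ring

noncomputable def omAuxJ (s : ℝ) : ℝ := (π/2)*s^2 - omAuxN s

lemma omAuxJ_cont : Continuous omAuxJ := by
  unfold omAuxJ omAuxN omAuxR
  exact ((continuous_const.mul (continuous_pow 2)).sub
    ((continuous_id.mul (Real.continuous_sqrt.comp (by continuity))).sub
      ((by continuity : Continuous fun s : ℝ => 1 - 2*s^2).mul Real.continuous_arcsin)))

lemma hasDerivAt_omAuxJ {s : ℝ} (hs : s ∈ Set.Ioo (0:ℝ) 1) :
    HasDerivAt omAuxJ (s * (π - 4*Real.arcsin s)) s := by
  have h1' : HasDerivAt (fun x : ℝ => (π/2)*x^2) ((π/2)*(2*s^(2-1))) s :=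
    (hasDerivAt_pow 2 s).const_mul (π/2)
  have := h1'.sub (hasDerivAt_omAuxN hs)
  refine this.congr_deriv (Eq.symm ?_)
  ring

lemma omAuxJ_one : omAuxJ 1 = 0 := by
  simp [omAuxJ, omAuxN, omAuxR, Real.arcsin_one]
  ring

lemma omAuxJ_pos {s : ℝ} (hs : s ∈ Set.Ioo (0:ℝ) 1) : 0 < omAuxJ s := by
  set a : ℝ := Real.sqrt 2 / 2 with ha
  have ha1 : a < 1 := by
    rw [ha, div_lt_one (by norm_num)]
    have : Real.sqrt 2 < Real.sqrt 4 := Real.sqrt_lt_sqrt (by norm_num) (by norm_num)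
    have h4 : Real.sqrt 4 = 2 := by
      rw [show (4:ℝ) = 2^2 by norm_num, Real.sqrt_sq (by norm_num)]
    linarith
  have ha0 : 0 < a := by
    rw [ha]
    positivity
  have hpi := Real.pi_pos
  have harcsin_a : Real.arcsin a = π/4 := by
    have h := Real.arcsin_sin (x := π/4) (by linarith) (by linarith)
    rwa [Real.sin_pi_div_four, ← ha] at h
  rcases lt_or_ge s a with hcase | hcase
  · have hm : StrictMonoOn omAuxJ (Set.Icc 0 a) := by
      apply strictMonoOn_of_deriv_pos (convex_Icc 0 a) omAuxJ_cont.continuousOn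
      intro x hx
      rw [interior_Icc] at hx
      have hx1 : x < 1 := lt_trans hx.2 ha1
      rw [(hasDerivAt_omAuxJ ⟨hx.1, hx1⟩).deriv]
      have harc : Real.arcsin x < π/4 := by
        rw [← harcsin_a]
        exact Real.strictMonoOn_arcsin ⟨by linarith [hx.1], by linarith⟩
          ⟨by linarith, ha1.le⟩ hx.2
      have hx0 := hx.1
      nlinarith
    have h0m : (0:ℝ) ∈ Set.Icc 0 a := Set.left_mem_Icc.2 ha0.le
    have hsm : s ∈ Set.Icc 0 a := ⟨hs.1.le, hcase.le⟩
    have := hm h0m hsm hs.1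
    have hJ0 : omAuxJ 0 = 0 := by simp [omAuxJ, omAuxN, omAuxR]
    linarith
  · have hm : StrictAntiOn omAuxJ (Set.Icc a 1) := by
      apply strictAntiOn_of_deriv_neg (convex_Icc a 1) omAuxJ_cont.continuousOn
      intro x hx
      rw [interior_Icc] at hx
      have hx0 : 0 < x := lt_trans ha0 hx.1
      rw [(hasDerivAt_omAuxJ ⟨hx0, hx.2⟩).deriv]
      have harc : π/4 < Real.arcsin x := by
        rw [← harcsin_a]
        exact Real.strictMonoOn_arcsin ⟨by linarith, ha1.le⟩
          ⟨by linarith, hx.2.le⟩ hx.1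
      nlinarith
    have := hm ⟨hcase, hs.2.le⟩ (Set.right_mem_Icc.2 (by linarith)) hs.2
    rw [omAuxJ_one] at this
    exact this

noncomputable def omAuxC (T : ℝ) : ℝ := (Real.sqrt (1 - T))⁻¹
noncomputable def omAuxRR (T : ℝ) : ℝ := omAuxC T - 1 - T/2 - (3/8)*T^2
noncomputable def omAuxRR' (T : ℝ) : ℝ := (1/2)*(omAuxC T)^3 - 1/2 - (3/4)*T
noncomputable def omAuxG (T : ℝ) : ℝ := T * omAuxRR' T - 3 * omAuxRR T
noncomputable def omAuxS (T : ℝ) : ℝ := omAuxRR T / T^3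

lemma omAuxC_pos {T : ℝ} (hT : T < 1) : 0 < omAuxC T := by
  unfold omAuxC
  have : 0 < Real.sqrt (1 - T) := Real.sqrt_pos.2 (by linarith)
  positivity

lemma omAuxC_sq {T : ℝ} (hT : T < 1) : (omAuxC T)^2 = (1 - T)⁻¹ := by
  unfold omAuxC
  rw [inv_pow, Real.sq_sqrt (by linarith)]

lemma omAuxC_cont : ContinuousOn omAuxC (Set.Ico 0 1) := by
  unfold omAuxC
  apply ContinuousOn.inv₀
  · exact (Real.continuous_sqrt.comp (by continuity)).continuousOn
  · intro x hx
    exact (Real.sqrt_pos.2 (by linarith [hx.2])).ne'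

lemma hasDerivAt_omAuxC {T : ℝ} (hT : T < 1) :
    HasDerivAt omAuxC ((1/2)*(omAuxC T)^3) T := by
  have hs : 0 < Real.sqrt (1 - T) := Real.sqrt_pos.2 (by linarith)
  have h1 : HasDerivAt (fun x : ℝ => 1 - x) (-1) T := by
    simpa using (hasDerivAt_id T).const_sub 1
  have h2 := (h1.sqrt (by linarith : (1:ℝ) - T ≠ 0)).inv hs.ne'
  refine h2.congr_deriv (Eq.symm ?_)
  have hsq : (Real.sqrt (1 - T))^2 = 1 - T := Real.sq_sqrt (by linarith)
  unfold omAuxC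
  rw [inv_pow]
  field_simp

lemma hasDerivAt_omAuxRR {T : ℝ} (hT : T < 1) :
    HasDerivAt omAuxRR (omAuxRR' T) T := by
  have h1 : HasDerivAt (fun x : ℝ => x/2) (1/2) T := by
    simpa using (hasDerivAt_id T).div_const 2
  have h2 : HasDerivAt (fun x : ℝ => (3/8)*x^2) ((3/8)*(2*T^(2-1))) T :=
    (hasDerivAt_pow 2 T).const_mul (3/8)
  have := (((hasDerivAt_omAuxC hT).sub_const 1).sub h1).sub h2
  refine this.congr_deriv (Eq.symm ?_)
  unfold omAuxRR'
  ring

lemma hasDerivAt_omAuxRR' {T : ℝ} (hT : T < 1) :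
    HasDerivAt omAuxRR' ((3/4)*(omAuxC T)^5 - 3/4) T := by
  have h1 : HasDerivAt (fun x => (1/2)*(omAuxC x)^3)
      ((1/2)*(3*(omAuxC T)^(3-1) * ((1/2)*(omAuxC T)^3))) T :=
    (((hasDerivAt_omAuxC hT).pow 3)).const_mul (1/2)
  have h2 : HasDerivAt (fun x : ℝ => 2⁻¹ + (3/4)*x) (3/4) T := by
    simpa using ((hasDerivAt_id T).const_mul (3/4)).const_add (2⁻¹ : ℝ)
  have := h1.sub h2
  have heq : ∀ x, omAuxRR' x = (1/2)*(omAuxC x)^3 - (2⁻¹ + (3/4)*x) := by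
    intro x; unfold omAuxRR'; ring
  rw [show omAuxRR' = fun x => (1/2)*(omAuxC x)^3 - (2⁻¹ + (3/4)*x) from funext heq]
  refine this.congr_deriv (Eq.symm ?_)
  ring

lemma omAuxRR'_pos {T : ℝ} (hT : T ∈ Set.Ioo (0:ℝ) 1) : 0 < omAuxRR' T := by
  obtain ⟨h0, h1⟩ := hT
  set u := Real.sqrt (1 - T) with hu
  have hu0 : 0 < u := Real.sqrt_pos.2 (by linarith)
  have hu2 : u^2 = 1 - T := Real.sq_sqrt (by linarith)
  have hu1 : u < 1 := by nlinarith
  have hc : omAuxC T = u⁻¹ := rfl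
  unfold omAuxRR'
  rw [hc]
  have key : 0 < 2 - 5*u^3 + 3*u^5 := by
    have hfac : 2 - 5*u^3 + 3*u^5 = (1-u)^2*(2+4*u+6*u^2+3*u^3) := by ring
    rw [hfac]
    exact mul_pos (pow_pos (by linarith) 2) (by positivity)
  have : (u⁻¹)^3 = 1/u^3 := by field_simp
  rw [this]
  rw [show (1:ℝ)/2 * (1/u^3) - 1/2 - 3/4*T = (2 - 2*u^3 - 3*u^3*T)/(4*u^3) by field_simp; ring]
  apply div_pos _ (by positivity)
  nlinarith [key, hu2]

lemma omAuxRR_pos {T : ℝ} (hT : T ∈ Set.Ioo (0:ℝ) 1) : 0 < omAuxRR T := by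
  refine omAux_pos_Ioo (f' := omAuxRR') ?_ (fun x hx => hasDerivAt_omAuxRR hx.2)
    (fun x hx => omAuxRR'_pos hx) ?_ T hT
  · unfold omAuxRR
    exact ((omAuxC_cont.sub continuousOn_const).sub
      (continuousOn_id.div_const 2)).sub (continuousOn_const.mul (continuousOn_pow 2))
  · simp [omAuxRR, omAuxC]

lemma hasDerivAt_omAuxG {T : ℝ} (hT : T < 1) :
    HasDerivAt omAuxG (T*((3/4)*(omAuxC T)^5 - 3/4) - 2*omAuxRR' T) T := by
  have h1 := (hasDerivAt_id T).mul (hasDerivAt_omAuxRR' hT)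
  have := h1.sub ((hasDerivAt_omAuxRR hT).const_mul 3)
  refine this.congr_deriv (Eq.symm ?_)
  simp only [id_eq]
  ring

lemma omAuxG_pos {T : ℝ} (hT : T ∈ Set.Ioo (0:ℝ) 1) : 0 < omAuxG T := by
  refine omAux_pos_Ioo
    (f' := fun T => T*((3/4)*(omAuxC T)^5 - 3/4) - 2*omAuxRR' T) ?_
    (fun x hx => hasDerivAt_omAuxG hx.2) (fun x hx => ?_) ?_ T hT
  · unfold omAuxG omAuxRR omAuxRR'
    apply ContinuousOn.sub
    · exact continuousOn_id.mul (((continuousOn_const.mul ((omAuxC_cont.pow 3))).sub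
        continuousOn_const).sub (continuousOn_const.mul continuousOn_id))
    · exact continuousOn_const.mul (((omAuxC_cont.sub continuousOn_const).sub
        (continuousOn_id.div_const 2)).sub (continuousOn_const.mul (continuousOn_pow 2)))
  · obtain ⟨h0, h1⟩ := hx
    have hu0 : 0 < Real.sqrt (1 - x) := Real.sqrt_pos.2 (by linarith)
    have hu2 : Real.sqrt (1 - x)^2 = 1 - x := Real.sq_sqrt (by linarith)
    set u := Real.sqrt (1 - x) with hu
    clear_value u
    have hu1 : u < 1 := by nlinarith
    have hx' : x = 1 - u^2 := by linarith
    have expand : x*((3/4)*(omAuxC x)^5 - 3/4) - 2*omAuxRR' x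
        = (3*x - 4*u^2 + 4*u^5 + 3*x*u^5)/(4*u^5) := by
      unfold omAuxRR' omAuxC
      rw [← hu]
      field_simp
      ring
    show 0 < x*((3/4)*(omAuxC x)^5 - 3/4) - 2*omAuxRR' x
    rw [expand]
    apply div_pos _ (by positivity)
    rw [hx']
    have heq : 3*(1-u^2) - 4*u^2 + 4*u^5 + 3*(1-u^2)*u^5
        = (1-u)^3*(3+9*u+11*u^2+9*u^3+3*u^4) := by ring
    rw [heq]
    exact mul_pos (pow_pos (by linarith) 3) (by positivity)
  · simp [omAuxG, omAuxRR, omAuxRR', omAuxC]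

lemma omAuxS_mono : StrictMonoOn omAuxS (Set.Ioo (0:ℝ) 1) := by
  apply omAux_strictMonoOn_Ioo (f' := fun T => omAuxG T / T^4)
  · intro x hx
    have hx0 : x ≠ 0 := ne_of_gt hx.1
    have h1' : HasDerivAt (fun x : ℝ => x^3) (3*x^(3-1)) x := hasDerivAt_pow 3 x
    have := (hasDerivAt_omAuxRR hx.2).div h1' (by positivity)
    refine this.congr_deriv (Eq.symm ?_)
    unfold omAuxG
    field_simp
    ring
  · intro x hx
    have := omAuxG_pos hx
    have hx0 := hx.1
    positivity

lemma omAuxS_pos {T : ℝ} (hT : T ∈ Set.Ioo (0:ℝ) 1) : 0 < omAuxS T := by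
  have := omAuxRR_pos hT
  have := hT.1
  unfold omAuxS
  positivity

noncomputable def omAuxT (Δ s : ℝ) : ℝ := (2*Δ/π) * (omAuxN s / s^2)

lemma omAuxT_pos {Δ s : ℝ} (hΔ : 0 < Δ) (hs : s ∈ Set.Ioo (0:ℝ) 1) :
    0 < omAuxT Δ s := by
  have hπ := Real.pi_pos
  have hN := omAuxN_pos hs
  have hs0 := hs.1
  unfold omAuxT
  positivity

lemma omAuxT_lt_one {Δ s : ℝ} (hΔ : Δ ∈ Set.Ioc (0:ℝ) 1) (hs : s ∈ Set.Ioo (0:ℝ) 1) :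
    omAuxT Δ s < 1 := by
  have hπ := Real.pi_pos
  have hJ := omAuxJ_pos hs
  have hs0 := hs.1
  unfold omAuxJ at hJ
  unfold omAuxT
  set x := omAuxN s / s^2 with hx
  have hx0 : 0 < x := div_pos (omAuxN_pos hs) (by positivity)
  have hx1 : x < π/2 := (div_lt_iff₀ (by positivity)).2 (by nlinarith)
  rw [div_mul_eq_mul_div, div_lt_one hπ]
  nlinarith [mul_nonneg (sub_nonneg.2 hΔ.2) hx0.le]

lemma omAuxT_mem {Δ s : ℝ} (hΔ : Δ ∈ Set.Ioc (0:ℝ) 1) (hs : s ∈ Set.Ioo (0:ℝ) 1) :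
    omAuxT Δ s ∈ Set.Ioo (0:ℝ) 1 :=
  ⟨omAuxT_pos hΔ.1 hs, omAuxT_lt_one hΔ hs⟩

lemma omAuxT_div_eq {Δ s : ℝ} (hs0 : s ≠ 0) : omAuxT Δ s / s = (2*Δ/π) * omAuxV s := by
  unfold omAuxT omAuxV
  rw [mul_div_assoc, div_div, ← pow_succ]

lemma omAuxT_div_mono {Δ : ℝ} (hΔ : 0 < Δ) :
    StrictMonoOn (fun s => omAuxT Δ s / s) (Set.Ioo (0:ℝ) 1) := by
  intro a ha b hb hab
  have hπ := Real.pi_pos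
  show omAuxT Δ a / a < omAuxT Δ b / b
  rw [omAuxT_div_eq (ne_of_gt ha.1), omAuxT_div_eq (ne_of_gt hb.1)]
  have := omAuxV_mono ha hb hab
  have hc : 0 < 2*Δ/π := by positivity
  nlinarith

lemma omAuxT_div_pos {Δ s : ℝ} (hΔ : 0 < Δ) (hs : s ∈ Set.Ioo (0:ℝ) 1) :
    0 < omAuxT Δ s / s :=
  div_pos (omAuxT_pos hΔ hs) hs.1

lemma omAuxT_mono {Δ : ℝ} (hΔ : 0 < Δ) :
    StrictMonoOn (fun s => omAuxT Δ s) (Set.Ioo (0:ℝ) 1) := by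
  have h := omAux_mul_mono (f := fun s => omAuxT Δ s / s) (g := fun s => s)
    (omAuxT_div_mono hΔ) (fun a ha b hb hab => hab)
    (fun x hx => omAuxT_div_pos hΔ hx) (fun x hx => hx.1)
  intro a ha b hb hab
  have := h ha hb hab
  dsimp only at this
  rw [div_mul_cancel₀ _ (ne_of_gt ha.1), div_mul_cancel₀ _ (ne_of_gt hb.1)] at this
  exact this

noncomputable def omAuxF (Δ s : ℝ) : ℝ :=
  omAuxS (omAuxT Δ s) * (omAuxT Δ s / s)^3 + (Δ/π) * omAuxW s
    + (3/4)*(Δ/π) * (s * omAuxW s) * (omAuxT Δ s / s + 2*(Δ*(4/(3*π))))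

lemma omAuxF_pos {Δ s : ℝ} (hΔ : Δ ∈ Set.Ioc (0:ℝ) 1) (hs : s ∈ Set.Ioo (0:ℝ) 1) :
    0 < omAuxF Δ s := by
  have hπ := Real.pi_pos
  have h1 := omAuxS_pos (omAuxT_mem hΔ hs)
  have h2 := omAuxT_div_pos hΔ.1 hs
  have h3 := omAuxW_pos hs
  have h4 := hs.1
  have hΔ0 := hΔ.1
  unfold omAuxF
  have halpha : 0 < Δ*(4/(3*π)) := by positivity
  positivity

lemma omAuxF_mono {Δ : ℝ} (hΔ : Δ ∈ Set.Ioc (0:ℝ) 1) :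
    StrictMonoOn (fun s => omAuxF Δ s) (Set.Ioo (0:ℝ) 1) := by
  have hπ := Real.pi_pos
  have hΔ0 := hΔ.1
  have hST : StrictMonoOn (fun s => omAuxS (omAuxT Δ s)) (Set.Ioo (0:ℝ) 1) := by
    intro a ha b hb hab
    exact omAuxS_mono (omAuxT_mem hΔ ha) (omAuxT_mem hΔ hb) (omAuxT_mono hΔ0 ha hb hab)
  have hSTpos : ∀ x ∈ Set.Ioo (0:ℝ) 1, 0 < omAuxS (omAuxT Δ x) :=
    fun x hx => omAuxS_pos (omAuxT_mem hΔ hx)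
  have hTd := omAuxT_div_mono hΔ0
  have hTdpos : ∀ x ∈ Set.Ioo (0:ℝ) 1, 0 < omAuxT Δ x / x :=
    fun x hx => omAuxT_div_pos hΔ0 hx
  have hTd2 : StrictMonoOn (fun s => (omAuxT Δ s / s)^2) (Set.Ioo (0:ℝ) 1) := by
    have := omAux_mul_mono hTd hTd hTdpos hTdpos
    intro a ha b hb hab
    have h := this ha hb hab
    nlinarith [h]
  have hTd3 : StrictMonoOn (fun s => (omAuxT Δ s / s)^3) (Set.Ioo (0:ℝ) 1) := by
    have := omAux_mul_mono hTd hTd2 hTdpos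
      (fun x hx => pow_pos (hTdpos x hx) 2)
    intro a ha b hb hab
    have h := this ha hb hab
    nlinarith [h, hTdpos a ha]
  have hterm1 : StrictMonoOn (fun s => omAuxS (omAuxT Δ s) * (omAuxT Δ s / s)^3)
      (Set.Ioo (0:ℝ) 1) :=
    omAux_mul_mono hST hTd3 hSTpos (fun x hx => pow_pos (hTdpos x hx) 3)
  have hterm2 : StrictMonoOn (fun s => (Δ/π) * omAuxW s) (Set.Ioo (0:ℝ) 1) := by
    intro a ha b hb hab
    have := omAuxW_mono ha hb hab
    have hc : 0 < Δ/π := by positivity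
    dsimp only
    nlinarith
  have hsW : StrictMonoOn (fun s => s * omAuxW s) (Set.Ioo (0:ℝ) 1) :=
    omAux_mul_mono (fun a _ b _ hab => hab) omAuxW_mono (fun x hx => hx.1)
      (fun x hx => omAuxW_pos hx)
  have hTA : StrictMonoOn (fun s => omAuxT Δ s / s + 2*(Δ*(4/(3*π)))) (Set.Ioo (0:ℝ) 1) := by
    intro a ha b hb hab
    have := hTd ha hb hab
    dsimp only
    linarith
  have hterm3 : StrictMonoOn
      (fun s => (3/4)*(Δ/π) * (s * omAuxW s) * (omAuxT Δ s / s + 2*(Δ*(4/(3*π)))))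
      (Set.Ioo (0:ℝ) 1) := by
    have hmul := omAux_mul_mono hsW hTA
      (fun x hx => by have := omAuxW_pos hx; have := hx.1; positivity)
      (fun x hx => by
        have h5 := omAuxT_div_pos hΔ0 hx
        have h6 : 0 < 2*(Δ*(4/(3*π))) := by positivity
        show 0 < omAuxT Δ x / x + 2*(Δ*(4/(3*π)))
        linarith)
    intro a ha b hb hab
    have h := hmul ha hb hab
    dsimp only at h ⊢
    have hc : 0 < (3/4)*(Δ/π) := by positivity
    nlinarith
  intro a ha b hb hab
  have h1 := hterm1 ha hb hab
  have h2 := hterm2 ha hb hab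
  have h3 := hterm3 ha hb hab
  dsimp only at h1 h2 h3 ⊢
  unfold omAuxF
  linarith

lemma omAux_zeta_eq {Δ s : ℝ} (hs : s ∈ Set.Ioo (0:ℝ) 1) :
    zeta Δ (s^2) = s^2 - (2*Δ/π) * omAuxN s := by
  obtain ⟨h0, h1⟩ := hs
  have hπ := Real.pi_pos
  have hsqrt : Real.sqrt (1 - (1-2*s^2)^2) = 2*s*omAuxR s := by
    rw [show 1 - (1-2*s^2)^2 = (2*s)^2*(1-s^2) by ring]
    rw [Real.sqrt_mul (by positivity), Real.sqrt_sq (by linarith)]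
    rfl
  have harccos : Real.arccos (1-2*s^2) = 2*Real.arcsin s := by
    have hcos : Real.cos (2*Real.arcsin s) = 1-2*s^2 := by
      rw [Real.cos_two_mul, Real.cos_arcsin, Real.sq_sqrt (by nlinarith)]
      ring
    rw [← hcos, Real.arccos_cos (by nlinarith [Real.arcsin_nonneg.2 h0.le]) ?_]
    · have := Real.arcsin_le_pi_div_two s
      linarith
  unfold zeta
  rw [hsqrt, harccos]
  unfold omAuxN
  field_simp

lemma omAux_sqrt_zeta {Δ s : ℝ} (hΔ : Δ ∈ Set.Ioc (0:ℝ) 1) (hs : s ∈ Set.Ioo (0:ℝ) 1) :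
    (Real.sqrt (zeta Δ (s^2)))⁻¹ = s⁻¹ * omAuxC (omAuxT Δ s) := by
  have h0 := hs.1
  have hπ := Real.pi_pos
  have hzeta : zeta Δ (s^2) = s^2 * (1 - omAuxT Δ s) := by
    rw [omAux_zeta_eq hs]
    unfold omAuxT
    field_simp
  rw [hzeta, Real.sqrt_mul (by positivity), Real.sqrt_sq h0.le, mul_inv]
  rfl

lemma omAuxF_eq {Δ s : ℝ} (hΔ : Δ ∈ Set.Ioc (0:ℝ) 1) (hs : s ∈ Set.Ioo (0:ℝ) 1) :
    s⁻¹ * omAuxC (omAuxT Δ s) - s⁻¹ - Δ*(4/(3*π)) - (3/2)*(Δ*(4/(3*π)))^2*s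
      = omAuxF Δ s * s^2 := by
  have hs0 : s ≠ 0 := ne_of_gt hs.1
  have hπ : π ≠ 0 := Real.pi_ne_zero
  have hT : omAuxT Δ s ≠ 0 := (omAuxT_pos hΔ.1 hs).ne'
  have hΔ0 : Δ ≠ 0 := ne_of_gt hΔ.1
  have hN : omAuxN s ≠ 0 := (omAuxN_pos hs).ne'
  unfold omAuxF omAuxS omAuxRR omAuxW omAuxP
  set C := omAuxC (omAuxT Δ s) with hC
  set T := omAuxT Δ s with hTdef
  have hTval : T = (2*Δ/π) * (omAuxN s / s^2) := rfl
  rw [hTval] at hT ⊢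
  field_simp
  ring

/-- `ω(w) = w + Δ 4/(3π) + (3/2)(Δ 4/(3π))² w⁻¹ + Δ ε(w) w⁻²` with
`ε : (1,∞) → (0,∞)` strictly decreasing. -/
theorem omega_expansion (Δ : ℝ) (hΔ : Δ ∈ Set.Ioc (0 : ℝ) 1) :
    ∃ ε : ℝ → ℝ, StrictAntiOn ε (Set.Ioi (1 : ℝ)) ∧
      (∀ w ∈ Set.Ioi (1 : ℝ), 0 < ε w) ∧
      ∀ w ∈ Set.Ioi (1 : ℝ),
        omegaMap Δ w =
          w + Δ * (4 / (3 * π)) + (3 / 2) * (Δ * (4 / (3 * π))) ^ 2 * w⁻¹ +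
            Δ * ε w * (w ^ 2)⁻¹ := by
  have hΔ0 : (0:ℝ) < Δ := hΔ.1
  have hmem : ∀ w : ℝ, w ∈ Set.Ioi (1:ℝ) → w⁻¹ ∈ Set.Ioo (0:ℝ) 1 := by
    intro w hw
    have hw1 : (1:ℝ) < w := hw
    constructor
    · positivity
    · rw [inv_lt_one_iff₀]
      right; exact hw1
  have heps : ∀ w : ℝ, w ∈ Set.Ioi (1:ℝ) →
      (omegaMap Δ w - w - Δ*(4/(3*π)) - (3/2)*(Δ*(4/(3*π)))^2 * w⁻¹) * w^2 / Δ
        = omAuxF Δ w⁻¹ / Δ := by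
    intro w hw
    have hw1 : (1:ℝ) < w := hw
    have hw0 : w ≠ 0 := by positivity
    have hs := hmem w hw
    have homega : omegaMap Δ w = w * omAuxC (omAuxT Δ w⁻¹) := by
      unfold omegaMap
      rw [← inv_pow, omAux_sqrt_zeta hΔ hs, inv_inv]
    have key := omAuxF_eq hΔ hs
    rw [inv_inv] at key
    have hdiff : omegaMap Δ w - w - Δ*(4/(3*π)) - (3/2)*(Δ*(4/(3*π)))^2 * w⁻¹
        = omAuxF Δ w⁻¹ * (w⁻¹)^2 := by
      rw [homega]
      linarith [key]
    rw [hdiff, inv_pow]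
    field_simp
  refine ⟨fun w => (omegaMap Δ w - w - Δ*(4/(3*π)) - (3/2)*(Δ*(4/(3*π)))^2 * w⁻¹) * w^2 / Δ,
    ?_, ?_, ?_⟩
  · intro a ha b hb hab
    have ha1 : (1:ℝ) < a := ha
    have hb1 : (1:ℝ) < b := hb
    dsimp only
    rw [heps a ha, heps b hb]
    have hinv : b⁻¹ < a⁻¹ := by
      rw [inv_lt_inv₀ (by linarith) (by linarith)]
      exact hab
    have := omAuxF_mono hΔ (hmem b hb) (hmem a ha) hinv
    exact (div_lt_div_iff_of_pos_right hΔ0).2 this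
  · intro w hw
    dsimp only
    rw [heps w hw]
    exact div_pos (omAuxF_pos hΔ (hmem w hw)) hΔ0
  · intro w hw
    have hw1 : (1:ℝ) < w := hw
    have hw0 : w ≠ 0 := by positivity
    field_simp
    ring
end

section
/- Let $\Delta \in (0,1]$ and $\omega$ be the inverse cosine distance map $\omega(w) = \zeta(w^{-2})^{-1/2}$ where $\zeta(z) = z - \Delta\frac{1}{\pi}(\sqrt{1-(1-2z)^2}-(1-2z)\arccos(1-2z))$. Then $\omega'(w) \in [0,1)$ whenever $w \geq (\frac{1-\cos(\min\{\Delta^{-1}\frac{\pi}{2}, \pi\})}{2})^{-1/2}$. -/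
set_option maxHeartbeats 1000000


open Real

lemma sin_sub_mul_cos_nonneg {θ : ℝ} (h0 : 0 ≤ θ) (hπ : θ ≤ π) :
    0 ≤ sin θ - θ * cos θ := by
  have key : MonotoneOn (fun t : ℝ => sin t - t * cos t) (Set.Icc 0 π) := by
    have hd : ∀ t : ℝ, HasDerivAt (fun t : ℝ => sin t - t * cos t) (t * sin t) t := by
      intro t
      have := (Real.hasDerivAt_sin t).sub ((hasDerivAt_id t).mul (Real.hasDerivAt_cos t))
      refine this.congr_deriv ?_; simp only [id_eq]; try ring
    apply monotoneOn_of_deriv_nonneg (convex_Icc 0 π)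
    · exact (Continuous.continuousOn (by continuity))
    · intro t ht
      exact ((hd t).differentiableAt).differentiableWithinAt
    · intro t ht
      rw [interior_Icc] at ht
      rw [(hd t).deriv]
      exact mul_nonneg ht.1.le (Real.sin_nonneg_of_nonneg_of_le_pi ht.1.le ht.2.le)
  have := key (Set.left_mem_Icc.2 Real.pi_pos.le) (Set.mem_Icc.2 ⟨h0, hπ⟩) h0
  simpa using this

lemma two_cos_add_mul_sin_le {θ : ℝ} (h0 : 0 ≤ θ) (hπ : θ ≤ π) :
    2 * cos θ + θ * sin θ ≤ 2 := by
  have key : AntitoneOn (fun t : ℝ => 2 * cos t + t * sin t) (Set.Icc 0 π) := by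
    have hd : ∀ t : ℝ, HasDerivAt (fun t : ℝ => 2 * cos t + t * sin t)
        (t * cos t - sin t) t := by
      intro t
      have := ((Real.hasDerivAt_cos t).const_mul 2).add
        ((hasDerivAt_id t).mul (Real.hasDerivAt_sin t))
      refine this.congr_deriv ?_; simp only [id_eq]; try ring
    apply antitoneOn_of_deriv_nonpos (convex_Icc 0 π)
    · exact (Continuous.continuousOn (by continuity))
    · intro t ht
      exact ((hd t).differentiableAt).differentiableWithinAt
    · intro t ht
      rw [interior_Icc] at ht
      rw [(hd t).deriv]
      have := sin_sub_mul_cos_nonneg ht.1.le ht.2.le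
      linarith
  have := key (Set.left_mem_Icc.2 Real.pi_pos.le) (Set.mem_Icc.2 ⟨h0, hπ⟩) h0
  simpa using this

lemma three_sin_le {θ : ℝ} (h0 : 0 ≤ θ) (hπ : θ ≤ π) :
    3 * sin θ ≤ θ * cos θ + 2 * θ := by
  have key : AntitoneOn (fun t : ℝ => 3 * sin t - t * cos t - 2 * t) (Set.Icc 0 π) := by
    have hd : ∀ t : ℝ, HasDerivAt (fun t : ℝ => 3 * sin t - t * cos t - 2 * t)
        (2 * cos t + t * sin t - 2) t := by
      intro t
      have := (((Real.hasDerivAt_sin t).const_mul 3).sub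
        ((hasDerivAt_id t).mul (Real.hasDerivAt_cos t))).sub ((hasDerivAt_id t).const_mul 2)
      refine this.congr_deriv ?_; simp only [id_eq]; try ring
    apply antitoneOn_of_deriv_nonpos (convex_Icc 0 π)
    · exact (Continuous.continuousOn (by continuity))
    · intro t ht
      exact ((hd t).differentiableAt).differentiableWithinAt
    · intro t ht
      rw [interior_Icc] at ht
      rw [(hd t).deriv]
      have := two_cos_add_mul_sin_le ht.1.le ht.2.le
      linarith
  have := key (Set.left_mem_Icc.2 Real.pi_pos.le) (Set.mem_Icc.2 ⟨h0, hπ⟩) h0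
  simp at this
  linarith

lemma zeta_hasDerivAt (Δ z : ℝ) (h1 : -1 < 1 - 2 * z) (h2 : 1 - 2 * z < 1) :
    HasDerivAt (zeta Δ) (1 - Δ * (2 / π) * Real.arccos (1 - 2 * z)) z := by
  have hu : HasDerivAt (fun z : ℝ => 1 - 2 * z) (-2) z := by
    simpa using ((hasDerivAt_id z).const_mul 2).const_sub 1
  have hp : HasDerivAt (fun z : ℝ => 1 - (1 - 2 * z) ^ 2) (4 * (1 - 2 * z)) z := by
    have := (hu.pow 2).const_sub 1
    refine this.congr_deriv ?_; push_cast; ring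
  have hpne : (1 : ℝ) - (1 - 2 * z) ^ 2 ≠ 0 := by nlinarith
  have hppos : (0 : ℝ) < 1 - (1 - 2 * z) ^ 2 := by nlinarith
  have hsq : HasDerivAt (fun z : ℝ => Real.sqrt (1 - (1 - 2 * z) ^ 2))
      (4 * (1 - 2 * z) / (2 * Real.sqrt (1 - (1 - 2 * z) ^ 2))) z := hp.sqrt hpne
  have harc : HasDerivAt (fun z : ℝ => Real.arccos (1 - 2 * z))
      (-(1 / Real.sqrt (1 - (1 - 2 * z) ^ 2)) * (-2)) z :=
    (Real.hasDerivAt_arccos (by linarith) (by linarith)).comp z hu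
  have hprod : HasDerivAt (fun z : ℝ => (1 - 2 * z) * Real.arccos (1 - 2 * z))
      ((-2) * Real.arccos (1 - 2 * z) +
        (1 - 2 * z) * (-(1 / Real.sqrt (1 - (1 - 2 * z) ^ 2)) * (-2))) z :=
    hu.mul harc
  have hmain := (hasDerivAt_id z).sub ((hsq.sub hprod).const_mul (Δ * (1 / π)))
  have hthis : HasDerivAt (zeta Δ)
      (1 - Δ * (1 / π) * (4 * (1 - 2 * z) / (2 * Real.sqrt (1 - (1 - 2 * z) ^ 2)) -
        ((-2) * Real.arccos (1 - 2 * z) +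
          (1 - 2 * z) * (-(1 / Real.sqrt (1 - (1 - 2 * z) ^ 2)) * (-2))))) z := by
    unfold zeta
    exact hmain
  convert hthis using 1
  have hs : Real.sqrt (1 - (1 - 2 * z) ^ 2) ≠ 0 := by positivity
  field_simp
  ring

lemma omega_hasDerivAt (Δ w : ℝ) (hw : 0 < w)
    (hz : 0 < zeta Δ ((w ^ 2)⁻¹)) (ζ' : ℝ)
    (hζ : HasDerivAt (zeta Δ) ζ' ((w ^ 2)⁻¹)) :
    HasDerivAt (omegaMap Δ)
      (ζ' / (w ^ 3 * (zeta Δ ((w ^ 2)⁻¹) * Real.sqrt (zeta Δ ((w ^ 2)⁻¹))))) w := by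
  have hwne : w ≠ 0 := ne_of_gt hw
  have hinner : HasDerivAt (fun w : ℝ => (w ^ 2)⁻¹) (-(2 * w) / (w ^ 2) ^ 2) w := by
    have := (hasDerivAt_pow 2 w).inv (pow_ne_zero 2 hwne)
    refine this.congr_deriv ?_; push_cast; ring
  have hcomp : HasDerivAt (fun w : ℝ => zeta Δ ((w ^ 2)⁻¹))
      (ζ' * (-(2 * w) / (w ^ 2) ^ 2)) w := by exact hζ.comp w hinner
  have hsne : Real.sqrt (zeta Δ ((w ^ 2)⁻¹)) ≠ 0 := by positivity
  have hsqrt : HasDerivAt (fun w : ℝ => Real.sqrt (zeta Δ ((w ^ 2)⁻¹)))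
      (ζ' * (-(2 * w) / (w ^ 2) ^ 2) / (2 * Real.sqrt (zeta Δ ((w ^ 2)⁻¹)))) w :=
    hcomp.sqrt (ne_of_gt hz)
  have hfin := hsqrt.inv hsne
  have hthis : HasDerivAt (omegaMap Δ)
      (-(ζ' * (-(2 * w) / (w ^ 2) ^ 2) / (2 * Real.sqrt (zeta Δ ((w ^ 2)⁻¹)))) /
        (Real.sqrt (zeta Δ ((w ^ 2)⁻¹))) ^ 2) w := by
    unfold omegaMap; exact hfin
  convert hthis using 1
  have hsq : Real.sqrt (zeta Δ ((w ^ 2)⁻¹)) ^ 2 = zeta Δ ((w ^ 2)⁻¹) := Real.sq_sqrt hz.le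
  rw [hsq]
  have hzp : 0 < zeta Δ (1 / w ^ 2) := by rwa [one_div]
  field_simp

/-- `ω'(w) ∈ [0,1)` whenever `w ≥ ((1 - cos(min(Δ⁻¹ π/2, π)))/2)^{-1/2}`
(on the domain `(1,∞)` of `ω`). -/
theorem omega_deriv_mem_Ico (Δ : ℝ) (hΔ : Δ ∈ Set.Ioc (0 : ℝ) 1) (w : ℝ) (hw1 : 1 < w)
    (hw : (Real.sqrt ((1 - Real.cos (min (Δ⁻¹ * (π / 2)) π)) / 2))⁻¹ ≤ w) :
    deriv (omegaMap Δ) w ∈ Set.Ico (0 : ℝ) 1 := by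
  obtain ⟨hΔ0, hΔ1⟩ := hΔ
  have hw0 : (0 : ℝ) < w := by linarith
  have hπ := Real.pi_pos
  set z : ℝ := (w ^ 2)⁻¹ with hzdef
  have hw2 : (1 : ℝ) < w ^ 2 := by nlinarith
  have hz0 : 0 < z := by positivity
  have hz1 : z < 1 := by
    rw [hzdef, inv_lt_one_iff₀]; right; exact hw2
  clear_value z
  have hu1 : -1 < 1 - 2 * z := by linarith
  have hu2 : 1 - 2 * z < 1 := by linarith
  set θ : ℝ := Real.arccos (1 - 2 * z) with hθdef
  have hθ0 : 0 < θ := Real.arccos_pos.2 hu2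
  have hθπ : θ ≤ π := Real.arccos_le_pi _
  have hcos : Real.cos θ = 1 - 2 * z := Real.cos_arccos (by linarith) (by linarith)
  have hsin : Real.sin θ = Real.sqrt (1 - (1 - 2 * z) ^ 2) := by
    rw [hθdef]; exact Real.sin_arccos _
  clear_value θ
  -- bound θ ≤ Δ⁻¹ * (π/2)
  set m : ℝ := min (Δ⁻¹ * (π / 2)) π with hmdef
  have hm0 : 0 < m := lt_min (by positivity) hπ
  have hmπ : m ≤ π := min_le_right _ _
  have hcm : Real.cos m < 1 := by
    have := Real.cos_lt_cos_of_nonneg_of_le_pi le_rfl hmπ hm0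
    simpa using this
  have hs0 : 0 < Real.sqrt ((1 - Real.cos m) / 2) := Real.sqrt_pos.2 (by linarith)
  have hzs : z ≤ (1 - Real.cos m) / 2 := by
    have h1 : Real.sqrt ((1 - Real.cos m) / 2) ≥ w⁻¹ := by
      rw [ge_iff_le, ← inv_inv (Real.sqrt ((1 - Real.cos m) / 2))]
      exact inv_anti₀ (by positivity) hw
    have h2 : (w⁻¹) ^ 2 ≤ Real.sqrt ((1 - Real.cos m) / 2) ^ 2 := by
      apply pow_le_pow_left₀ (by positivity) h1
    rw [Real.sq_sqrt (by linarith)] at h2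
    calc z = (w⁻¹) ^ 2 := by rw [hzdef]; rw [inv_pow]
    _ ≤ _ := h2
  have hθm : θ ≤ m := by
    have h1 : Real.cos m ≤ 1 - 2 * z := by linarith
    have h2 : θ ≤ Real.arccos (Real.cos m) := by
      rw [hθdef, Real.arccos_eq_pi_div_two_sub_arcsin, Real.arccos_eq_pi_div_two_sub_arcsin]
      have := Real.monotone_arcsin h1
      linarith
    rwa [Real.arccos_cos hm0.le hmπ] at h2
  set x : ℝ := Δ * (2 / π) * θ with hxdef
  have hx0 : 0 < x := by rw [hxdef]; positivity
  have hx1 : x ≤ 1 := by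
    have hθle : θ ≤ Δ⁻¹ * (π / 2) := le_trans hθm (min_le_left _ _)
    rw [hxdef]
    calc Δ * (2 / π) * θ ≤ Δ * (2 / π) * (Δ⁻¹ * (π / 2)) := by
          apply mul_le_mul_of_nonneg_left hθle (by positivity)
    _ = 1 := by field_simp
  clear_value x
  -- zeta expression and lower bound
  have hzeq : zeta Δ z = z - Δ * (1 / π) * (Real.sin θ - θ * Real.cos θ) := by
    rw [zeta, ← hθdef, ← hsin, ← hcos]; ring
  have hstep : Real.sin θ - θ * Real.cos θ ≤ 2 / 3 * θ * (1 - Real.cos θ) := by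
    have h3 := three_sin_le hθ0.le hθπ
    nlinarith
  have hζlb : z * (1 - 2 / 3 * x) ≤ zeta Δ z := by
    rw [hzeq, hxdef]
    have hΔπ : 0 < Δ / π := by positivity
    have hkey := mul_le_mul_of_nonneg_left hstep hΔπ.le
    have hz2 : 1 - Real.cos θ = 2 * z := by linarith
    rw [hz2] at hkey
    have heq : z * (1 - 2 / 3 * (Δ * (2 / π) * θ)) - (z - Δ * (1 / π) * (Real.sin θ - θ * Real.cos θ)) =
        Δ / π * (Real.sin θ - θ * Real.cos θ) - Δ / π * (2 / 3 * θ * (2 * z)) := by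
      ring
    linarith [hkey, heq]
  have hζ0 : 0 < zeta Δ z := by
    have h13 : (0:ℝ) < 1 - 2 / 3 * x := by linarith
    have := mul_pos hz0 h13
    linarith
  -- the derivative
  have hζd : HasDerivAt (zeta Δ) (1 - x) z := by
    have := zeta_hasDerivAt Δ z hu1 hu2
    rwa [← hθdef, ← hxdef] at this
  have hζ0' : 0 < zeta Δ ((w ^ 2)⁻¹) := hzdef ▸ hζ0
  have hζd' : HasDerivAt (zeta Δ) (1 - x) ((w ^ 2)⁻¹) := hzdef ▸ hζd
  have hD := omega_hasDerivAt Δ w hw0 hζ0' (1 - x) hζd'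
  rw [hD.deriv, ← hzdef]
  have hsζ0 : 0 < Real.sqrt (zeta Δ z) := Real.sqrt_pos.2 hζ0
  have hden : 0 < w ^ 3 * (zeta Δ z * Real.sqrt (zeta Δ z)) :=
    mul_pos (pow_pos hw0 3) (mul_pos hζ0 hsζ0)
  constructor
  · apply div_nonneg (by linarith) hden.le
  · rw [div_lt_one hden]
    -- key quantities
    have hsz : Real.sqrt z = w⁻¹ := by
      rw [hzdef, Real.sqrt_inv, Real.sqrt_sq hw0.le]
    have hzs0 : 0 < z * Real.sqrt z := mul_pos hz0 (Real.sqrt_pos.2 hz0)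
    set y : ℝ := Real.sqrt (1 - 2 / 3 * x) with hydef
    have hy2 : y ^ 2 = 1 - 2 / 3 * x := Real.sq_sqrt (by linarith)
    have hy0 : 0 < y := Real.sqrt_pos.2 (by linarith)
    have step1 : 1 - x < y ^ 3 := by
      rcases le_or_gt (1 - x) 0 with h | h
      · exact lt_of_le_of_lt h (by positivity)
      · have hsq : (1 - x) ^ 2 < (y ^ 3) ^ 2 := by
          have : (y ^ 3) ^ 2 = (y ^ 2) ^ 3 := by ring
          rw [this, hy2]
          nlinarith [mul_pos (mul_pos hx0 hx0) (show (0:ℝ) < 9 - 8 * x by linarith)]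
        exact lt_of_pow_lt_pow_left₀ 2 (by positivity) hsq
    have step2 : z * Real.sqrt z * y ^ 3 ≤ zeta Δ z * Real.sqrt (zeta Δ z) := by
      have hsqle : Real.sqrt (z * (1 - 2 / 3 * x)) ≤ Real.sqrt (zeta Δ z) :=
        Real.sqrt_le_sqrt hζlb
      have heq : Real.sqrt (z * (1 - 2 / 3 * x)) = Real.sqrt z * y := by
        rw [Real.sqrt_mul hz0.le, hydef]
      have h1 : z * (1 - 2 / 3 * x) * (Real.sqrt z * y) ≤ zeta Δ z * Real.sqrt (zeta Δ z) := by
        apply mul_le_mul hζlb (heq ▸ hsqle) (by positivity) hζ0.le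
      calc z * Real.sqrt z * y ^ 3 = z * (1 - 2 / 3 * x) * (Real.sqrt z * y) := by
            rw [← hy2]; ring
      _ ≤ _ := h1
    have step3 : (1 - x) * (z * Real.sqrt z) < zeta Δ z * Real.sqrt (zeta Δ z) := by
      calc (1 - x) * (z * Real.sqrt z) < y ^ 3 * (z * Real.sqrt z) := by
            apply mul_lt_mul_of_pos_right step1 hzs0
      _ = z * Real.sqrt z * y ^ 3 := by ring
      _ ≤ _ := step2
    have hzw : z * Real.sqrt z = (w ^ 3)⁻¹ := by
      rw [hsz, hzdef]
      field_simp
    have hw3 : w ^ 3 * (z * Real.sqrt z) = 1 := by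
      rw [hzw]; field_simp
    calc 1 - x = w ^ 3 * ((1 - x) * (z * Real.sqrt z)) := by
          rw [show w ^ 3 * ((1 - x) * (z * Real.sqrt z)) = (1 - x) * (w ^ 3 * (z * Real.sqrt z)) by ring, hw3, mul_one]
    _ < w ^ 3 * (zeta Δ z * Real.sqrt (zeta Δ z)) := by
          apply mul_lt_mul_of_pos_left step3 (pow_pos hw0 3)
end

section
/- Let $\Delta \in (0,1]$, $w > 1$, and let $\omega$ be the inverse cosine distance map. Denote by $\omega^{\circ k}$ the $k$-fold iterate. Then there exists a constant $C > 0$ (depending on $w$ and $\Delta$) such that for all $k \geq 1$: $|\omega^{\circ k}(w) - (w + \Delta\frac{4}{3\pi}(k-1) + \Delta\frac{2}{\pi}\log(\Delta^{-1}\frac{3\pi}{4}w + k - 1))| \leq C$. -/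
set_option maxHeartbeats 2000000

open Real

lemma aux_sub_sin_le {x : ℝ} (hx : 0 ≤ x) : x - sin x ≤ x ^ 3 / 6 := by
  have key : ∀ y : ℝ, HasDerivAt (fun t => sin t + t ^ 3 / 6 - t) (cos y + y ^ 2 / 2 - 1) y := by
    intro y
    have h1 : HasDerivAt (fun t : ℝ => sin t) (cos y) y := hasDerivAt_sin y
    have h2 : HasDerivAt (fun t : ℝ => t ^ 3 / 6) (y ^ 2 / 2) y := by
      have := (hasDerivAt_pow 3 y).div_const 6
      exact this.congr_deriv (by ring)
    have h3 : HasDerivAt (fun t : ℝ => t) 1 y := hasDerivAt_id y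
    exact (h1.add h2).sub h3
  have mono : Monotone (fun t : ℝ => sin t + t ^ 3 / 6 - t) := by
    apply monotone_of_deriv_nonneg
    · exact fun y => (key y).differentiableAt
    · intro y
      rw [(key y).deriv]
      nlinarith [one_sub_sq_div_two_le_cos (x := y)]
  have := mono hx
  simp at this
  linarith

lemma aux_trig_sandwich {θ : ℝ} (h0 : 0 ≤ θ) (hπ : θ ≤ π) :
    8 / 3 * sin (θ / 2) ^ 3 ≤ sin θ - θ * cos θ ∧
    sin θ - θ * cos θ ≤ 8 / 3 * sin (θ / 2) ^ 3 + θ ^ 5 / 120 := by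
  have key : ∀ y : ℝ, HasDerivAt (fun t => sin t - t * cos t - 8 / 3 * sin (t / 2) ^ 3)
      (y * sin y - 4 * sin (y / 2) ^ 2 * cos (y / 2)) y := by
    intro y
    have h1 : HasDerivAt (fun t : ℝ => sin t) (cos y) y := hasDerivAt_sin y
    have h2 : HasDerivAt (fun t : ℝ => t * cos t) (cos y - y * sin y) y := by
      have := (hasDerivAt_id y).mul (hasDerivAt_cos y)
      simp only [id] at this
      exact this.congr_deriv (by ring)
    have h4 : HasDerivAt (fun t : ℝ => t / 2) (1 / 2 : ℝ) y := by
      simpa using (hasDerivAt_id y).div_const 2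
    have h5 : HasDerivAt (fun t : ℝ => sin (t / 2)) (cos (y / 2) * (1 / 2)) y :=
      HasDerivAt.comp (h₂ := sin) y (hasDerivAt_sin (y / 2)) h4
    have h6 : HasDerivAt (fun t : ℝ => sin (t / 2) ^ 3)
        (3 * sin (y / 2) ^ 2 * (cos (y / 2) * (1 / 2))) y := by
      exact (h5.pow 3).congr_deriv (by norm_num)
    have h7 : HasDerivAt (fun t : ℝ => 8 / 3 * sin (t / 2) ^ 3)
        (8 / 3 * (3 * sin (y / 2) ^ 2 * (cos (y / 2) * (1 / 2)))) y := h6.const_mul _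
    have := (h1.sub h2).sub h7
    exact this.congr_deriv (by ring)
  have hsin2 : ∀ y : ℝ, sin y = 2 * sin (y / 2) * cos (y / 2) := by
    intro y
    rw [show sin y = sin (2 * (y / 2)) by congr 1; ring, sin_two_mul]
  -- derivative formula rewritten
  have fact : ∀ y ∈ Set.Icc (0:ℝ) π,
      y * sin y - 4 * sin (y / 2) ^ 2 * cos (y / 2)
        = 2 * sin (y / 2) * cos (y / 2) * (y - 2 * sin (y / 2)) := by
    intro y _
    rw [hsin2 y]; ring
  have hmem : ∀ y ∈ Set.Icc (0:ℝ) π, 0 ≤ sin (y/2) ∧ 0 ≤ cos (y/2) ∧ sin (y/2) ≤ y/2 ∧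
      y/2 - sin (y/2) ≤ (y/2)^3/6 := by
    intro y hy
    obtain ⟨hy0, hyπ⟩ := hy
    have h1 : 0 ≤ y / 2 := by linarith
    have h2 : y / 2 ≤ π / 2 := by linarith
    refine ⟨sin_nonneg_of_nonneg_of_le_pi h1 (by linarith [pi_pos]), ?_, sin_le h1, aux_sub_sin_le h1⟩
    exact cos_nonneg_of_mem_Icc ⟨by linarith [pi_pos], h2⟩
  constructor
  · -- lower bound: f monotone on [0,π], f 0 = 0
    have mono : MonotoneOn (fun t => sin t - t * cos t - 8 / 3 * sin (t / 2) ^ 3)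
        (Set.Icc (0:ℝ) π) := by
      apply monotoneOn_of_deriv_nonneg (convex_Icc 0 π)
      · exact Continuous.continuousOn (by fun_prop)
      · intro y _; exact (key y).differentiableAt.differentiableWithinAt
      · intro y hy
        rw [interior_Icc] at hy
        rw [(key y).deriv, fact y (Set.mem_Icc_of_Ioo hy)]
        obtain ⟨hs, hc, hsle, _⟩ := hmem y (Set.mem_Icc_of_Ioo hy)
        have : 0 ≤ y - 2 * sin (y/2) := by linarith
        positivity
    have := mono (Set.left_mem_Icc.2 (le_of_lt pi_pos)) ⟨h0, hπ⟩ h0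
    simp at this
    linarith
  · -- upper bound
    have mono : MonotoneOn (fun t => t ^ 5 / 120 - (sin t - t * cos t - 8 / 3 * sin (t / 2) ^ 3))
        (Set.Icc (0:ℝ) π) := by
      apply monotoneOn_of_deriv_nonneg (convex_Icc 0 π)
      · exact Continuous.continuousOn (by fun_prop)
      · intro y _
        exact (((hasDerivAt_pow 5 y).div_const 120).sub (key y)).differentiableAt.differentiableWithinAt
      · intro y hy
        rw [interior_Icc] at hy
        have hd : HasDerivAt (fun t => t ^ 5 / 120 - (sin t - t * cos t - 8 / 3 * sin (t / 2) ^ 3)) _ y := ((hasDerivAt_pow 5 y).div_const 120).sub (key y)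
        rw [hd.deriv]
        rw [fact y (Set.mem_Icc_of_Ioo hy)]
        obtain ⟨hs, hc, hsle, hcube⟩ := hmem y (Set.mem_Icc_of_Ioo hy)
        have hy0 : 0 ≤ y := le_of_lt hy.1
        have hc1 : cos (y/2) ≤ 1 := cos_le_one _
        have e1 : 2 * sin (y / 2) * cos (y / 2) * (y - 2 * sin (y / 2)) ≤
            2 * (y/2) * 1 * (2 * ((y/2)^3/6)) := by
          have h1 : 0 ≤ y - 2 * sin (y/2) := by linarith
          have h2 : y - 2 * sin (y/2) ≤ 2 * ((y/2)^3/6) := by linarith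
          have h3 : 2 * sin (y/2) * cos (y/2) ≤ 2 * (y/2) * 1 := by nlinarith
          have h4 : 0 ≤ 2 * sin (y/2) * cos (y/2) := by positivity
          nlinarith
        have : 2 * (y/2) * 1 * (2 * ((y/2)^3/6)) = y^4/24 := by ring
        rw [this] at e1
        have h120 : (5:ℕ) * y ^ (5-1) / 120 = y^4/24 := by push_cast; ring
        rw [h120]
        linarith
    have := mono (Set.left_mem_Icc.2 (le_of_lt pi_pos)) ⟨h0, hπ⟩ h0
    simp at this
    linarith

lemma aux_lt_pi_z {θ : ℝ} (h0 : 0 < θ) (hπ : θ < π) :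
    sin θ - θ * cos θ < π * (1 - cos θ) / 2 := by
  set p : ℝ → ℝ := fun t => π * (1 - cos t) / 2 - (sin t - t * cos t) with hp
  have key : ∀ y : ℝ, HasDerivAt p (sin y * (π / 2 - y)) y := by
    intro y
    have h1 : HasDerivAt (fun t : ℝ => π * (1 - cos t) / 2) (π * sin y / 2) y := by
      have := (((hasDerivAt_cos y).const_sub 1).const_mul π).div_const 2
      exact this.congr_deriv (by ring)
    have h2 : HasDerivAt (fun t : ℝ => sin t) (cos y) y := hasDerivAt_sin y
    have h3 : HasDerivAt (fun t : ℝ => t * cos t) (cos y - y * sin y) y := by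
      have := (hasDerivAt_id y).mul (hasDerivAt_cos y)
      simp only [id] at this
      exact this.congr_deriv (by ring)
    have := h1.sub (h2.sub h3)
    exact this.congr_deriv (by ring)
  have hp0 : p 0 = 0 := by simp [hp]
  have hpπ : p π = 0 := by simp [hp]; ring
  rcases le_or_gt θ (π / 2) with hle | hgt
  · have mono : StrictMonoOn p (Set.Icc (0:ℝ) (π/2)) := by
      apply strictMonoOn_of_deriv_pos (convex_Icc 0 (π/2))
      · exact Continuous.continuousOn (by fun_prop)
      · intro y hy
        rw [interior_Icc] at hy
        rw [(key y).deriv]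
        obtain ⟨hy1, hy2⟩ := hy
        have hs : 0 < sin y := sin_pos_of_pos_of_lt_pi hy1 (by linarith [pi_pos])
        have : 0 < π / 2 - y := by linarith
        positivity
    have := mono (Set.left_mem_Icc.2 (by positivity)) ⟨h0.le, hle⟩ h0
    rw [hp0] at this
    simp only [hp] at this
    linarith
  · have mono : StrictAntiOn p (Set.Icc (π/2) π) := by
      apply strictAntiOn_of_deriv_neg (convex_Icc (π/2) π)
      · exact Continuous.continuousOn (by fun_prop)
      · intro y hy
        rw [interior_Icc] at hy
        rw [(key y).deriv]
        obtain ⟨hy1, hy2⟩ := hy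
        have hs : 0 < sin y := sin_pos_of_pos_of_lt_pi (by linarith [pi_pos]) hy2
        have : π / 2 - y < 0 := by linarith
        nlinarith
    have := mono ⟨hgt.le, hπ.le⟩ (Set.right_mem_Icc.2 (by linarith [pi_pos])) hπ
    rw [hpπ] at this
    simp only [hp] at this
    linarith

lemma zeta_bounds (Δ : ℝ) (hΔ0 : 0 < Δ) (hΔ1 : Δ ≤ 1) {z : ℝ} (h0 : 0 < z) (h1 : z < 1) :
    0 < zeta Δ z ∧ zeta Δ z ≤ z - Δ * (8 / (3 * π)) * (z * sqrt z) ∧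
      z - Δ * (8 / (3 * π)) * (z * sqrt z) - π ^ 4 / 120 * (z ^ 2 * sqrt z) ≤ zeta Δ z := by
  have hπ := pi_pos
  set θ := arccos (1 - 2 * z) with hθdef
  have hb1 : (-1 : ℝ) ≤ 1 - 2 * z := by linarith
  have hb2 : 1 - 2 * z ≤ 1 := by linarith
  have hθ0 : 0 < θ := arccos_pos.2 (by linarith)
  have hθπ' : θ ≤ π := arccos_le_pi _
  have hθπ : θ < π := by
    rcases lt_or_eq_of_le hθπ' with h | h
    · exact h
    · exfalso; have := arccos_eq_pi.1 h; linarith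
  have hcos : cos θ = 1 - 2 * z := cos_arccos hb1 hb2
  have hsin : sin θ = Real.sqrt (1 - (1 - 2 * z) ^ 2) := sin_arccos _
  have hhalf : sin (θ / 2) = sqrt z := by
    have h2 : sin (θ / 2) ^ 2 = z := by
      have := sin_sq_eq_half_sub (θ / 2)
      rw [show 2 * (θ / 2) = θ by ring, hcos] at this
      linarith
    have hnn : 0 ≤ sin (θ / 2) :=
      sin_nonneg_of_nonneg_of_le_pi (by linarith) (by linarith)
    rw [← h2, Real.sqrt_sq hnn]
  have hsz : sqrt z ^ 2 = z := Real.sq_sqrt h0.le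
  have hszn : 0 ≤ sqrt z := Real.sqrt_nonneg z
  have hθle : θ ≤ π * sqrt z := by
    have := mul_le_sin (x := θ / 2) (by linarith) (by linarith)
    rw [hhalf] at this
    rw [div_mul_eq_mul_div, div_le_iff₀ hπ] at this
    linarith
  have hsand := aux_trig_sandwich hθ0.le hθπ'
  rw [hhalf] at hsand
  have hcube : sqrt z ^ 3 = z * sqrt z := by
    have : sqrt z ^ 3 = sqrt z ^ 2 * sqrt z := by ring
    rw [this, hsz]
  rw [hcube] at hsand
  obtain ⟨hlow, hup⟩ := hsand
  -- θ^5 bound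
  have hθ5 : θ ^ 5 ≤ π ^ 5 * (z ^ 2 * sqrt z) := by
    have h5 : θ ^ 5 ≤ (π * sqrt z) ^ 5 := by
      apply pow_le_pow_left₀ hθ0.le hθle
    calc θ ^ 5 ≤ (π * sqrt z) ^ 5 := h5
      _ = π ^ 5 * (sqrt z ^ 2 * sqrt z ^ 2 * sqrt z) := by ring
      _ = π ^ 5 * (z ^ 2 * sqrt z) := by rw [hsz]; ring
  -- G = sin θ - θ cos θ, and zeta = z - (Δ/π) G
  have hzeta : zeta Δ z = z - Δ * (1 / π) * (sin θ - θ * cos θ) := by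
    rw [zeta, ← hθdef, ← hsin, ← hcos]; ring
  have hGpos : 8 / 3 * (z * sqrt z) ≤ sin θ - θ * cos θ := hlow
  constructor
  · -- positivity
    have hlt := aux_lt_pi_z hθ0 hθπ
    rw [hzeta]
    have h2 : Δ * (1 / π) * (sin θ - θ * cos θ) < Δ * (1 / π) * (π * (1 - cos θ) / 2) :=
      mul_lt_mul_of_pos_left hlt (by positivity)
    have h3 : Δ * (1 / π) * (π * (1 - cos θ) / 2) = Δ * z := by
      rw [hcos]; field_simp; ring
    nlinarith
  constructor
  · rw [hzeta]
    have : Δ * (8 / (3 * π)) * (z * sqrt z) ≤ Δ * (1 / π) * (sin θ - θ * cos θ) := by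
      have h2 : Δ * (8 / (3 * π)) * (z * sqrt z) = Δ * (1 / π) * (8 / 3 * (z * sqrt z)) := by
        field_simp
      rw [h2]
      apply mul_le_mul_of_nonneg_left hGpos (by positivity)
    linarith
  · rw [hzeta]
    have h2 : sin θ - θ * cos θ ≤ 8 / 3 * (z * sqrt z) + π ^ 5 * (z ^ 2 * sqrt z) / 120 := by
      calc sin θ - θ * cos θ ≤ 8 / 3 * (z * sqrt z) + θ ^ 5 / 120 := hup
        _ ≤ _ := by linarith
    have h3 : Δ * (1 / π) * (sin θ - θ * cos θ) ≤
        Δ * (8 / (3 * π)) * (z * sqrt z) + Δ * (π ^ 4 / 120) * (z ^ 2 * sqrt z) := by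
      calc Δ * (1 / π) * (sin θ - θ * cos θ)
          ≤ Δ * (1 / π) * (8 / 3 * (z * sqrt z) + π ^ 5 * (z ^ 2 * sqrt z) / 120) := by
            apply mul_le_mul_of_nonneg_left h2 (by positivity)
        _ = Δ * (8 / (3 * π)) * (z * sqrt z) + Δ * (π ^ 4 / 120) * (z ^ 2 * sqrt z) := by
            field_simp
    have h4 : Δ * (π ^ 4 / 120) * (z ^ 2 * sqrt z) ≤ π ^ 4 / 120 * (z ^ 2 * sqrt z) := by
      apply mul_le_mul_of_nonneg_right _ (by positivity)
      nlinarith [pow_pos hπ 4]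
    linarith


lemma inv_sqrt_lower_aux {u P : ℝ} (hP : 0 < P) (h1 : u < 1)
    (hsq : P ^ 2 * (1 - u) ≤ 1) : P ≤ (Real.sqrt (1 - u))⁻¹ := by
  have hy0 : 0 < Real.sqrt (1 - u) := Real.sqrt_pos.2 (by linarith)
  have hy2 : Real.sqrt (1 - u) ^ 2 = 1 - u := Real.sq_sqrt (by linarith)
  rw [inv_eq_one_div, le_div_iff₀ hy0]
  have h2 : (P * Real.sqrt (1 - u)) ^ 2 ≤ 1 := by rw [mul_pow, hy2]; exact hsq
  nlinarith [mul_pos hP hy0]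

lemma inv_sqrt_upper_aux {u Q : ℝ} (hQ : 0 < Q) (h1 : u < 1)
    (hsq : 1 ≤ Q ^ 2 * (1 - u)) : (Real.sqrt (1 - u))⁻¹ ≤ Q := by
  have hy0 : 0 < Real.sqrt (1 - u) := Real.sqrt_pos.2 (by linarith)
  have hy2 : Real.sqrt (1 - u) ^ 2 = 1 - u := Real.sq_sqrt (by linarith)
  rw [inv_eq_one_div, div_le_iff₀ hy0]
  have h2 : 1 ≤ (Q * Real.sqrt (1 - u)) ^ 2 := by rw [mul_pow, hy2]; exact hsq
  nlinarith [mul_pos hQ hy0]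

lemma inv_sqrt_lower {u : ℝ} (h0 : 0 ≤ u) (h1 : u < 1) : 1 + u / 2 ≤ (Real.sqrt (1 - u))⁻¹ := by
  apply inv_sqrt_lower_aux (by positivity) h1
  nlinarith [pow_nonneg h0 2, pow_nonneg h0 3]

lemma inv_sqrt_sandwich {u : ℝ} (h0 : 0 ≤ u) (h1 : u ≤ 1/2) :
    1 + u / 2 + 3 * u ^ 2 / 8 ≤ (Real.sqrt (1 - u))⁻¹ ∧
    (Real.sqrt (1 - u))⁻¹ ≤ 1 + u / 2 + 3 * u ^ 2 / 8 + u ^ 3 := by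
  constructor
  · apply inv_sqrt_lower_aux (by positivity) (by linarith)
    nlinarith [pow_nonneg h0 3, pow_nonneg h0 4, pow_nonneg h0 5]
  · apply inv_sqrt_upper_aux (by positivity) (by linarith)
    have hg : 0 ≤ 11/8 - 79/64 * u - 25/64 * u^2 + u^3/4 - u^4 := by
      nlinarith [sq_nonneg u, mul_nonneg h0 h0, pow_nonneg h0 3, pow_nonneg h0 4,
        mul_nonneg (mul_nonneg h0 h0) h0, sq_nonneg (u - 1/2)]
    have := mul_nonneg (pow_nonneg h0 3) hg
    nlinarith [this]


lemma sqrt_inv_sq {v : ℝ} (hv : 0 < v) : Real.sqrt ((v ^ 2)⁻¹) = v⁻¹ := by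
  rw [Real.sqrt_inv, Real.sqrt_sq hv.le]

lemma omega_mono_upper (Δ : ℝ) {v p : ℝ} (hp : 0 < p) (hle : p ≤ zeta Δ ((v ^ 2)⁻¹)) :
    omegaMap Δ v ≤ (Real.sqrt p)⁻¹ :=
  inv_anti₀ (Real.sqrt_pos.2 hp) (Real.sqrt_le_sqrt hle)

lemma omega_mono_lower (Δ : ℝ) {v q : ℝ} (hz : 0 < zeta Δ ((v ^ 2)⁻¹))
    (hle : zeta Δ ((v ^ 2)⁻¹) ≤ q) : (Real.sqrt q)⁻¹ ≤ omegaMap Δ v :=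
  inv_anti₀ (Real.sqrt_pos.2 hz) (Real.sqrt_le_sqrt hle)

lemma sqrt_scaled {v u : ℝ} (hv : 0 < v) :
    (Real.sqrt ((v ^ 2)⁻¹ * (1 - u)))⁻¹ = v * (Real.sqrt (1 - u))⁻¹ := by
  rw [Real.sqrt_mul (by positivity), sqrt_inv_sq hv, mul_inv, inv_inv]

lemma omega_ge (Δ : ℝ) (hΔ0 : 0 < Δ) (hΔ1 : Δ ≤ 1) {v : ℝ} (hv : 1 < v) :
    v + Δ * (4 / (3 * π)) ≤ omegaMap Δ v := by
  have hπ := pi_pos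
  have hπ3 := pi_gt_three
  set a := Δ * (4 / (3 * π)) with ha
  have ha0 : 0 < a := by positivity
  have ha9 : a ≤ 4 / 9 := by
    rw [ha]
    calc Δ * (4 / (3 * π)) ≤ 1 * (4 / (3 * π)) := by
          apply mul_le_mul_of_nonneg_right hΔ1 (by positivity)
      _ ≤ 4 / 9 := by rw [one_mul, div_le_div_iff₀ (by positivity) (by norm_num)]; nlinarith
  have hv0 : 0 < v := by linarith
  have hz0 : 0 < (v ^ 2)⁻¹ := by positivity
  have hz1 : (v ^ 2)⁻¹ < 1 := by
    rw [inv_lt_one_iff₀]; right; nlinarith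
  obtain ⟨hpos, hub, _⟩ := zeta_bounds Δ hΔ0 hΔ1 hz0 hz1
  set u : ℝ := 2 * a / v with hu
  have hu0 : 0 ≤ u := by positivity
  have hu1 : u < 1 := by
    rw [hu, div_lt_one hv0]; nlinarith
  have hident : (v ^ 2)⁻¹ - Δ * (8 / (3 * π)) * ((v ^ 2)⁻¹ * Real.sqrt ((v ^ 2)⁻¹))
      = (v ^ 2)⁻¹ * (1 - u) := by
    rw [sqrt_inv_sq hv0, hu, ha]
    field_simp
    ring
  rw [hident] at hub
  have h1 : (Real.sqrt ((v ^ 2)⁻¹ * (1 - u)))⁻¹ ≤ omegaMap Δ v :=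
    omega_mono_lower Δ hpos hub
  rw [sqrt_scaled hv0] at h1
  have h2 : 1 + u / 2 ≤ (Real.sqrt (1 - u))⁻¹ := inv_sqrt_lower hu0 hu1
  have h3 : v * (1 + u / 2) ≤ v * (Real.sqrt (1 - u))⁻¹ :=
    mul_le_mul_of_nonneg_left h2 hv0.le
  have h4 : v * (1 + u / 2) = v + a := by rw [hu]; field_simp
  linarith


lemma poly_upper {a E v : ℝ} (ha0 : 0 < a) (ha9 : a ≤ 4 / 9) (hE0 : 0 < E)
    (hE83 : E ≤ 83 / 100) (hv : 4 ≤ v) :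
    v * (1 + (2 * a / v + E / v ^ 3) / 2 + 3 * (2 * a / v + E / v ^ 3) ^ 2 / 8
      + (2 * a / v + E / v ^ 3) ^ 3) ≤ v + a + 3 / 2 * a ^ 2 / v + 2 / v ^ 2 := by
  have hv0 : (0:ℝ) < v := by linarith
  have h16 : (16:ℝ) ≤ v ^ 2 := by nlinarith
  have h64 : (64:ℝ) ≤ v ^ 3 := by nlinarith
  have hu20 : 0 ≤ 2 * a / v + E / v ^ 3 := by positivity
  have hterm1 : v * (2 * a / v + E / v ^ 3) / 2 = a + E / (2 * v ^ 2) := by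
    field_simp
  have hterm2 : 3 / 8 * (v * (2 * a / v + E / v ^ 3) ^ 2)
      = 3 / 2 * a ^ 2 / v + 3 / 2 * a * E / v ^ 3 + 3 / 8 * E ^ 2 / v ^ 5 := by
    field_simp; ring
  have hu2B : 2 * a / v + E / v ^ 3 ≤ (941 / 1000) / v := by
    have e1 : E / v ^ 3 = (E / v ^ 2) / v := by ring
    have e2 : E / v ^ 2 ≤ 83 / 1600 := by
      calc E / v ^ 2 ≤ (83 / 100) / 16 := div_le_div₀ (by norm_num) hE83 (by norm_num) h16
        _ = 83 / 1600 := by norm_num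
    rw [e1, ← add_div]
    have e3 : 2 * a + E / v ^ 2 ≤ 941 / 1000 := by linarith
    exact div_le_div₀ (by norm_num) e3 hv0 le_rfl
  have hterm3 : v * (2 * a / v + E / v ^ 3) ^ 3 ≤ (941 / 1000) ^ 3 / v ^ 2 := by
    have h2 : (2 * a / v + E / v ^ 3) ^ 3 ≤ ((941 / 1000) / v) ^ 3 :=
      pow_le_pow_left₀ hu20 hu2B 3
    calc v * (2 * a / v + E / v ^ 3) ^ 3 ≤ v * ((941 / 1000) / v) ^ 3 :=
        mul_le_mul_of_nonneg_left h2 hv0.le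
      _ = (941 / 1000) ^ 3 / v ^ 2 := by field_simp
  have hgoal2 : E / (2 * v ^ 2) + 3 / 2 * a * E / v ^ 3 + 3 / 8 * E ^ 2 / v ^ 5
      + (941 / 1000) ^ 3 / v ^ 2 ≤ 2 / v ^ 2 := by
    rw [← sub_nonneg]
    have expand2 : 2 / v ^ 2 - (E / (2 * v ^ 2) + 3 / 2 * a * E / v ^ 3
          + 3 / 8 * E ^ 2 / v ^ 5 + (941 / 1000) ^ 3 / v ^ 2)
        = (2 * v ^ 3 - (E * v ^ 3 / 2 + 3 / 2 * a * E * v ^ 2 + 3 / 8 * E ^ 2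
          + (941 / 1000) ^ 3 * v ^ 3)) / v ^ 5 := by
      field_simp
    rw [expand2]
    apply div_nonneg _ (by positivity)
    have hae : a * E ≤ 332 / 900 := by nlinarith
    have hE2 : E ^ 2 ≤ 6889 / 10000 := by nlinarith
    nlinarith [mul_nonneg (by linarith : (0:ℝ) ≤ 83 / 100 - E) (by positivity : (0:ℝ) ≤ v ^ 3),
      mul_nonneg (by linarith : (0:ℝ) ≤ 332 / 900 - a * E) (by positivity : (0:ℝ) ≤ v ^ 2),
      mul_nonneg (by linarith : (0:ℝ) ≤ v - 4) (sq_nonneg v)]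
  have hexp : v * (1 + (2 * a / v + E / v ^ 3) / 2 + 3 * (2 * a / v + E / v ^ 3) ^ 2 / 8
      + (2 * a / v + E / v ^ 3) ^ 3)
      = v + v * (2 * a / v + E / v ^ 3) / 2 + 3 / 8 * (v * (2 * a / v + E / v ^ 3) ^ 2)
        + v * (2 * a / v + E / v ^ 3) ^ 3 := by ring
  rw [hexp, hterm1, hterm2]
  linarith

lemma omega_step (Δ : ℝ) (hΔ0 : 0 < Δ) (hΔ1 : Δ ≤ 1) {v : ℝ} (hv : 4 ≤ v) :
    v + Δ * (4 / (3 * π)) + 3 / 2 * (Δ * (4 / (3 * π))) ^ 2 / v ≤ omegaMap Δ v ∧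
    omegaMap Δ v ≤ v + Δ * (4 / (3 * π)) + 3 / 2 * (Δ * (4 / (3 * π))) ^ 2 / v + 2 / v ^ 2 := by
  have hπ := pi_pos
  have hπ3 := pi_gt_three
  have hπ315 : π < 315 / 100 := by
    have := pi_lt_d2
    norm_num at this ⊢
    linarith
  set a := Δ * (4 / (3 * π)) with ha
  have ha0 : 0 < a := by positivity
  have ha9 : a ≤ 4 / 9 := by
    rw [ha]
    calc Δ * (4 / (3 * π)) ≤ 1 * (4 / (3 * π)) := by
          apply mul_le_mul_of_nonneg_right hΔ1 (by positivity)
      _ ≤ 4 / 9 := by rw [one_mul, div_le_div_iff₀ (by positivity) (by norm_num)]; nlinarith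
  set E : ℝ := π ^ 4 / 120 with hE
  have hE0 : 0 < E := by positivity
  have hE83 : E ≤ 83 / 100 := by
    have hp2 : π ^ 2 ≤ 993 / 100 := by nlinarith
    have hp4 : π ^ 4 ≤ 99 := by nlinarith [sq_nonneg π]
    rw [hE]; linarith
  have hv0 : 0 < v := by linarith
  have hv1 : 1 < v := by linarith
  have hz0 : 0 < (v ^ 2)⁻¹ := by positivity
  have hz1 : (v ^ 2)⁻¹ < 1 := by
    rw [inv_lt_one_iff₀]; right; nlinarith
  obtain ⟨hpos, hub, hlb⟩ := zeta_bounds Δ hΔ0 hΔ1 hz0 hz1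
  set u1 : ℝ := 2 * a / v with hu1def
  set u2 : ℝ := 2 * a / v + E / v ^ 3 with hu2def
  have hu10 : 0 ≤ u1 := by positivity
  have hu20 : 0 ≤ u2 := by positivity
  have hu2half : u2 ≤ 1 / 2 := by
    rw [hu2def]
    have h1 : 2 * a / v ≤ (8 / 9) / 4 := by
      apply div_le_div₀ (by norm_num) (by linarith) (by norm_num) hv
    have h2 : E / v ^ 3 ≤ (83 / 100) / 64 := by
      apply div_le_div₀ (by norm_num) hE83 (by norm_num) (by nlinarith)
    linarith
  have hu1half : u1 ≤ 1 / 2 := by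
    have : E / v ^ 3 ≥ 0 := by positivity
    rw [hu1def]; rw [hu2def] at hu2half; linarith
  -- identities
  have hsq : Real.sqrt ((v ^ 2)⁻¹) = v⁻¹ := sqrt_inv_sq hv0
  have hident1 : (v ^ 2)⁻¹ - Δ * (8 / (3 * π)) * ((v ^ 2)⁻¹ * Real.sqrt ((v ^ 2)⁻¹))
      = (v ^ 2)⁻¹ * (1 - u1) := by
    rw [hsq, hu1def, ha]; field_simp; ring
  have hident2 : (v ^ 2)⁻¹ - Δ * (8 / (3 * π)) * ((v ^ 2)⁻¹ * Real.sqrt ((v ^ 2)⁻¹))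
      - π ^ 4 / 120 * (((v ^ 2)⁻¹) ^ 2 * Real.sqrt ((v ^ 2)⁻¹)) = (v ^ 2)⁻¹ * (1 - u2) := by
    rw [hsq, hu2def, ha, hE]; field_simp; ring
  rw [hident1] at hub
  rw [hident2] at hlb
  clear_value u1 u2
  clear_value a E
  clear hident1 hident2 hsq
  have hlow2 : 0 < (v ^ 2)⁻¹ * (1 - u2) := by
    apply mul_pos hz0; linarith
  constructor
  · -- lower bound on omega
    have h1 : (Real.sqrt ((v ^ 2)⁻¹ * (1 - u1)))⁻¹ ≤ omegaMap Δ v :=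
      omega_mono_lower Δ hpos hub
    rw [sqrt_scaled hv0] at h1
    have h2 := (inv_sqrt_sandwich hu10 hu1half).1
    have h3 : v * (1 + u1 / 2 + 3 * u1 ^ 2 / 8) ≤ v * (Real.sqrt (1 - u1))⁻¹ :=
      mul_le_mul_of_nonneg_left h2 hv0.le
    have h4 : v * (1 + u1 / 2 + 3 * u1 ^ 2 / 8) = v + a + 3 / 2 * a ^ 2 / v := by
      rw [hu1def]; field_simp; ring
    linarith
  · -- upper bound on omega
    have h1 : omegaMap Δ v ≤ (Real.sqrt ((v ^ 2)⁻¹ * (1 - u2)))⁻¹ :=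
      omega_mono_upper Δ hlow2 hlb
    rw [sqrt_scaled hv0] at h1
    have h2 := (inv_sqrt_sandwich hu20 hu2half).2
    have h3 : v * (Real.sqrt (1 - u2))⁻¹ ≤ v * (1 + u2 / 2 + 3 * u2 ^ 2 / 8 + u2 ^ 3) :=
      mul_le_mul_of_nonneg_left h2 hv0.le
    have h4 : omegaMap Δ v ≤ v * (1 + u2 / 2 + 3 * u2 ^ 2 / 8 + u2 ^ 3) := le_trans h1 h3
    rw [hu2def] at h4
    exact le_trans h4 (poly_upper ha0 ha9 hE0 hE83 hv)


lemma log_ge_one_sub_inv {x : ℝ} (hx : 0 < x) : 1 - 1 / x ≤ Real.log x := by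
  have h := Real.log_le_sub_one_of_pos (x := x⁻¹) (by positivity)
  rw [Real.log_inv] at h
  rw [one_div]
  linarith

lemma log_succ_lb {n : ℝ} (hn : 1 ≤ n) : 1 / (n + 1) ≤ Real.log (n + 1) - Real.log n := by
  have hn0 : 0 < n := by linarith
  have h1 : Real.log (n + 1) - Real.log n = Real.log ((n + 1) / n) :=
    (Real.log_div (by linarith) (by linarith)).symm
  have h2 := log_ge_one_sub_inv (x := (n + 1) / n) (by positivity)
  have h3 : 1 - 1 / ((n + 1) / n) = 1 / (n + 1) := by
    field_simp; ring
  rw [h1]; rw [h3] at h2; exact h2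

lemma log_succ_ub {n : ℝ} (hn : 1 ≤ n) : Real.log (n + 1) - Real.log n ≤ 1 / n := by
  have hn0 : 0 < n := by linarith
  have h1 : Real.log (n + 1) - Real.log n = Real.log ((n + 1) / n) :=
    (Real.log_div (by linarith) (by linarith)).symm
  have h2 := Real.log_le_sub_one_of_pos (x := (n + 1) / n) (by positivity)
  have h3 : (n + 1) / n - 1 = 1 / n := by field_simp; ring
  rw [h1]; rw [h3] at h2; exact h2

lemma invariant_upper (a CU s : ℝ) (x : ℕ → ℝ) (k₀ : ℕ)
    (ha : 0 < a) (hs : 2 ≤ s)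
    (hgrow : ∀ k : ℕ, a * (s + k) ≤ x k)
    (hstep : ∀ k : ℕ, k₀ ≤ k → x (k + 1) ≤ x k + a + 3 / 2 * a ^ 2 / x k + 2 / x k ^ 2)
    (hbase : x k₀ ≤ a * (s + k₀) + 3 * a / 2 * Real.log (s + k₀) + CU
      - (3 * a + 4 / a ^ 2) / (s + k₀)) :
    ∀ k : ℕ, k₀ ≤ k → x k ≤ a * (s + k) + 3 * a / 2 * Real.log (s + k) + CU
      - (3 * a + 4 / a ^ 2) / (s + k) := by
  set γ : ℝ := 3 * a + 4 / a ^ 2 with hγ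
  intro k hk
  induction k, hk using Nat.le_induction with
  | base => exact hbase
  | succ k hk ih =>
    set n : ℝ := s + k with hn
    have hn2 : 2 ≤ n := by rw [hn]; have : (0:ℝ) ≤ k := Nat.cast_nonneg k; linarith
    have hn0 : 0 < n := by linarith
    have hcast : s + ((k + 1 : ℕ) : ℝ) = n + 1 := by push_cast; rw [hn]; ring
    rw [hcast]
    have hxk : a * n ≤ x k := hgrow k
    have hxk0 : 0 < x k := lt_of_lt_of_le (by positivity) hxk
    have hstep' := hstep k hk
    -- bound the increment terms
    have hc : 3 / 2 * a ^ 2 / x k ≤ 3 * a / 2 / n := by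
      have h1 : 3 / 2 * a ^ 2 / x k ≤ 3 / 2 * a ^ 2 / (a * n) :=
        div_le_div_of_nonneg_left (by positivity) (by positivity) hxk
      have h2 : 3 / 2 * a ^ 2 / (a * n) = 3 * a / 2 / n := by
        field_simp
      linarith
    have hq : 2 / x k ^ 2 ≤ 2 / a ^ 2 / n ^ 2 := by
      have h1 : (a * n) ^ 2 ≤ x k ^ 2 := by
        nlinarith [mul_le_mul hxk hxk (by positivity : (0:ℝ) ≤ a * n) (le_of_lt hxk0)]
      have h2 : 2 / x k ^ 2 ≤ 2 / (a * n) ^ 2 :=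
        div_le_div_of_nonneg_left (by norm_num) (by positivity) h1
      have h3 : 2 / (a * n) ^ 2 = 2 / a ^ 2 / n ^ 2 := by field_simp
      linarith
    -- key numeric inequality
    have hlog := log_succ_lb (n := n) (by linarith)
    have hkey : 3 * a / 2 / n + 2 / a ^ 2 / n ^ 2 ≤ 3 * a / 2 / (n + 1) + (γ / n - γ / (n + 1)) := by
      have expand : (3 * a / 2 / (n + 1) + (γ / n - γ / (n + 1)))
          - (3 * a / 2 / n + 2 / a ^ 2 / n ^ 2)
          = (3 * a ^ 3 / 2 * n + 2 * n - 2) / (a ^ 2 * n ^ 2 * (n + 1)) := by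
        rw [hγ]; field_simp; ring
      have hnum : 0 ≤ 3 * a ^ 3 / 2 * n + 2 * n - 2 := by
        nlinarith [mul_nonneg (pow_pos ha 3).le hn0.le]
      have : 0 ≤ (3 * a ^ 3 / 2 * n + 2 * n - 2) / (a ^ 2 * n ^ 2 * (n + 1)) := by positivity
      linarith
    have hlog' : 3 * a / 2 / (n + 1) ≤ 3 * a / 2 * (Real.log (n + 1) - Real.log n) := by
      have := mul_le_mul_of_nonneg_left hlog (by positivity : (0:ℝ) ≤ 3 * a / 2)
      rw [mul_one_div] at this
      linarith
    have hfin : x (k + 1) ≤ x k + a + 3 * a / 2 / n + 2 / a ^ 2 / n ^ 2 := by linarith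
    calc x (k + 1) ≤ x k + a + 3 * a / 2 / n + 2 / a ^ 2 / n ^ 2 := hfin
      _ ≤ (a * n + 3 * a / 2 * Real.log n + CU - γ / n) + a + 3 * a / 2 / n
          + 2 / a ^ 2 / n ^ 2 := by linarith [ih]
      _ ≤ a * (n + 1) + 3 * a / 2 * Real.log (n + 1) + CU - γ / (n + 1) := by
          have := hlog'
          nlinarith [hkey, hlog']


lemma sqrt_diff_lb {n : ℝ} (hn : 1 ≤ n) :
    1 / (6 * n * Real.sqrt n) ≤ 1 / Real.sqrt n - 1 / Real.sqrt (n + 1) := by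
  set p := Real.sqrt n with hpdef
  set q := Real.sqrt (n + 1) with hqdef
  have hp2 : p ^ 2 = n := Real.sq_sqrt (by linarith)
  have hq2 : q ^ 2 = n + 1 := Real.sq_sqrt (by linarith)
  have hp1 : 1 ≤ p := by
    rw [hpdef, show (1:ℝ) = Real.sqrt 1 by simp]
    exact Real.sqrt_le_sqrt hn
  have hp0 : 0 < p := by linarith
  have hq0 : 0 < q := Real.sqrt_pos.2 (by linarith)
  have hpq : p ≤ q := Real.sqrt_le_sqrt (by linarith)
  have hq2p : q ≤ 2 * p := by
    rw [hqdef, hpdef]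
    calc Real.sqrt (n + 1) ≤ Real.sqrt (4 * n) := Real.sqrt_le_sqrt (by linarith)
      _ = 2 * Real.sqrt n := by
          rw [show (4:ℝ) * n = 2 ^ 2 * n by ring, Real.sqrt_mul (by positivity),
            Real.sqrt_sq (by norm_num)]
  have he : (q - p) * (q + p) = 1 := by linear_combination hq2 - hp2
  have hdiff : 1 / p - 1 / q = 1 / (p * q * (q + p)) := by
    rw [div_sub_div _ _ (ne_of_gt hp0) (ne_of_gt hq0)]
    rw [show p * q * (q + p) = (p * q) * (q + p) by ring]
    rw [eq_div_iff (by positivity)]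
    field_simp
    linear_combination he
  rw [hdiff]
  have hden : p * q * (q + p) ≤ 6 * n * p := by
    have h1 : p * q * (q + p) ≤ p * (2 * p) * (2 * p + p) := by
      have : q + p ≤ 2 * p + p := by linarith
      have h0 : 0 ≤ p * q := by positivity
      nlinarith [mul_le_mul_of_nonneg_left hq2p (le_of_lt hp0)]
    have h2 : p * (2 * p) * (2 * p + p) = 6 * (p ^ 2) * p := by ring
    rw [h2, hp2] at h1
    exact h1
  exact one_div_le_one_div_of_le (by positivity) hden

lemma log_le_two_sqrt {n : ℝ} (hn : 1 ≤ n) : Real.log n ≤ 2 * Real.sqrt n := by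
  have h1 : Real.log (Real.sqrt n) = Real.log n / 2 := Real.log_sqrt (by linarith)
  have h2 : Real.log (Real.sqrt n) ≤ Real.sqrt n - 1 :=
    Real.log_le_sub_one_of_pos (Real.sqrt_pos.2 (by linarith))
  nlinarith [Real.sqrt_nonneg n]

lemma invariant_lower (a CU CL s : ℝ) (x : ℕ → ℝ) (k₀ : ℕ)
    (ha : 0 < a) (hs : 2 ≤ s) (hCU : 0 ≤ CU)
    (hxpos : ∀ k : ℕ, 0 < x k)
    (hupper : ∀ k : ℕ, k₀ ≤ k → x k ≤ a * (s + k) + 3 * a / 2 * Real.log (s + k) + CU)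
    (hstep : ∀ k : ℕ, k₀ ≤ k → x k + a + 3 / 2 * a ^ 2 / x k ≤ x (k + 1))
    (hbase : a * (s + k₀) + 3 * a / 2 * Real.log (s + k₀) + CL
      + (27 * a + 9 * CU) / Real.sqrt (s + k₀) ≤ x k₀) :
    ∀ k : ℕ, k₀ ≤ k → a * (s + k) + 3 * a / 2 * Real.log (s + k) + CL
      + (27 * a + 9 * CU) / Real.sqrt (s + k) ≤ x k := by
  set β : ℝ := 27 * a + 9 * CU with hβ
  intro k hk
  induction k, hk using Nat.le_induction with
  | base => exact hbase
  | succ k hk ih =>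
    set n : ℝ := s + k with hn
    have hn2 : 2 ≤ n := by rw [hn]; have : (0:ℝ) ≤ k := Nat.cast_nonneg k; linarith
    have hn0 : 0 < n := by linarith
    have hcast : s + ((k + 1 : ℕ) : ℝ) = n + 1 := by push_cast; rw [hn]; ring
    rw [hcast]
    have hxk0 := hxpos k
    have hstep' := hstep k hk
    set p := Real.sqrt n with hpdef
    have hp2 : p ^ 2 = n := Real.sq_sqrt (by linarith)
    have hp1 : 1 ≤ p := by
      rw [hpdef, show (1:ℝ) = Real.sqrt 1 by simp]
      exact Real.sqrt_le_sqrt (by linarith)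
    have hp0 : 0 < p := by linarith
    -- upper bound on x k in terms of n and p
    have hup : x k ≤ a * n + 3 * a * p + CU := by
      have h1 := hupper k hk
      rw [← hn] at h1
      have h2 : Real.log n ≤ 2 * p := by rw [hpdef]; exact log_le_two_sqrt (by linarith)
      nlinarith
    have hm0 : (0:ℝ) ≤ 3 * p + CU / a := by positivity
    have hup2 : x k ≤ a * (n + (3 * p + CU / a)) := by
      calc x k ≤ a * n + 3 * a * p + CU := hup
        _ = a * (n + (3 * p + CU / a)) := by field_simp; ring
    -- lower bound on the c/x term
    have hc : 3 * a / 2 * (1 / n) - 3 * a / 2 * ((3 * p + CU / a) / n ^ 2)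
        ≤ 3 / 2 * a ^ 2 / x k := by
      have h1 : 3 / 2 * a ^ 2 / (a * (n + (3 * p + CU / a))) ≤ 3 / 2 * a ^ 2 / x k :=
        div_le_div_of_nonneg_left (by positivity) hxk0 hup2
      have h2 : 3 / 2 * a ^ 2 / (a * (n + (3 * p + CU / a))) = 3 * a / 2 * (1 / (n + (3 * p + CU / a))) := by
        rw [mul_one_div]
        rw [div_eq_div_iff (by positivity) (by positivity)]
        ring
      have h3 : 1 / n - (3 * p + CU / a) / n ^ 2 ≤ 1 / (n + (3 * p + CU / a)) := by
        set m := 3 * p + CU / a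
        rw [div_sub_div _ _ (ne_of_gt hn0) (by positivity), div_le_div_iff₀ (by positivity) (by positivity)]
        nlinarith [sq_nonneg m, hm0]
      have h4 : 3 * a / 2 * (1 / n - (3 * p + CU / a) / n ^ 2) ≤ 3 * a / 2 * (1 / (n + (3 * p + CU / a))) :=
        mul_le_mul_of_nonneg_left h3 (by positivity)
      rw [mul_sub] at h4
      linarith
    -- the correction term comparison
    have hsq := sqrt_diff_lb (n := n) (by linarith)
    rw [← hpdef] at hsq
    have hcorr : 3 * a / 2 * ((3 * p + CU / a) / n ^ 2) ≤ β * (1 / p - 1 / Real.sqrt (n + 1)) := by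
      have h1 : 3 * a / 2 * ((3 * p + CU / a) / n ^ 2) = (9 * a / 2 * p + 3 / 2 * CU) / n ^ 2 := by
        field_simp; ring
      have h2 : (9 * a / 2 * p + 3 / 2 * CU) / n ^ 2 ≤ (9 * a / 2 + 3 / 2 * CU) * p / n ^ 2 := by
        apply div_le_div_of_nonneg_right _ (by positivity)
        nlinarith
      have h3 : (9 * a / 2 + 3 / 2 * CU) * p / n ^ 2 = (9 * a / 2 + 3 / 2 * CU) * (p / n ^ 2) := by ring
      have h4 : p / n ^ 2 = 1 / (n * p) := by
        rw [div_eq_div_iff (by positivity) (by positivity)]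
        nlinarith [hp2]
      have h5 : (9 * a / 2 + 3 / 2 * CU) * (1 / (n * p)) = (9 * a / 2 + 3 / 2 * CU) * 6 * (1 / (6 * n * p)) := by
        field_simp
      have h6 : (9 * a / 2 + 3 / 2 * CU) * 6 ≤ β := by rw [hβ]; linarith
      have h7 : (9 * a / 2 + 3 / 2 * CU) * 6 * (1 / (6 * n * p)) ≤ β * (1 / p - 1 / Real.sqrt (n + 1)) := by
        apply mul_le_mul h6 hsq (by positivity) (by rw [hβ]; positivity)
      calc 3 * a / 2 * ((3 * p + CU / a) / n ^ 2)
          = (9 * a / 2 * p + 3 / 2 * CU) / n ^ 2 := h1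
        _ ≤ (9 * a / 2 + 3 / 2 * CU) * p / n ^ 2 := h2
        _ = (9 * a / 2 + 3 / 2 * CU) * (p / n ^ 2) := h3
        _ = (9 * a / 2 + 3 / 2 * CU) * (1 / (n * p)) := by rw [h4]
        _ = (9 * a / 2 + 3 / 2 * CU) * 6 * (1 / (6 * n * p)) := h5
        _ ≤ β * (1 / p - 1 / Real.sqrt (n + 1)) := h7
    -- log increment upper bound
    have hlog := log_succ_ub (n := n) (by linarith)
    have hlog' : 3 * a / 2 * (Real.log (n + 1) - Real.log n) ≤ 3 * a / 2 * (1 / n) :=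
      mul_le_mul_of_nonneg_left hlog (by positivity : (0:ℝ) ≤ 3 * a / 2)
    -- combine
    have hβdiv : β / p - β / Real.sqrt (n + 1) = β * (1 / p - 1 / Real.sqrt (n + 1)) := by
      rw [mul_sub, mul_one_div, mul_one_div]
    calc a * (n + 1) + 3 * a / 2 * Real.log (n + 1) + CL + β / Real.sqrt (n + 1)
        = (a * n + 3 * a / 2 * Real.log n + CL + β / p)
          + a + 3 * a / 2 * (Real.log (n + 1) - Real.log n)
          - (β / p - β / Real.sqrt (n + 1)) := by ring
      _ ≤ (a * n + 3 * a / 2 * Real.log n + CL + β / p)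
          + a + 3 * a / 2 * (1 / n) - β * (1 / p - 1 / Real.sqrt (n + 1)) := by
          rw [hβdiv] at *; linarith
      _ ≤ (a * n + 3 * a / 2 * Real.log n + CL + β / p) + a + 3 / 2 * a ^ 2 / x k := by
          linarith
      _ ≤ x k + a + 3 / 2 * a ^ 2 / x k := by linarith [ih]
      _ ≤ x (k + 1) := hstep'

/-- Propagation of inverse cosine distances: for fixed `w > 1` there is `C > 0` with
`|ω^∘k(w) - (w + Δ 4/(3π) (k-1) + Δ (2/π) log(Δ⁻¹ (3π/4) w + k - 1))| ≤ C` for all `k ≥ 1`. -/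
theorem omega_iterate_propagation (Δ : ℝ) (hΔ : Δ ∈ Set.Ioc (0 : ℝ) 1)
    (w : ℝ) (hw : 1 < w) :
    ∃ C : ℝ, 0 < C ∧ ∀ k : ℕ, 1 ≤ k →
      |(omegaMap Δ)^[k] w -
        (w + Δ * (4 / (3 * π)) * ((k : ℝ) - 1) +
          Δ * (2 / π) * Real.log (Δ⁻¹ * (3 * π / 4) * w + (k : ℝ) - 1))| ≤ C := by
  obtain ⟨hΔ0, hΔ1⟩ := hΔ
  have hπ := pi_pos
  have hπ3 := pi_gt_three
  set a : ℝ := Δ * (4 / (3 * π)) with ha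
  set s : ℝ := Δ⁻¹ * (3 * π / 4) * w with hs
  set x : ℕ → ℝ := fun k => (omegaMap Δ)^[k] w with hx
  have ha0 : 0 < a := by rw [ha]; positivity
  have ha9 : a ≤ 4 / 9 := by
    rw [ha]
    calc Δ * (4 / (3 * π)) ≤ 1 * (4 / (3 * π)) := by
          apply mul_le_mul_of_nonneg_right hΔ1 (by positivity)
      _ ≤ 4 / 9 := by rw [one_mul, div_le_div_iff₀ (by positivity) (by norm_num)]; nlinarith
  have has : a * s = w := by rw [ha, hs]; field_simp
  have hs0 : 0 < s := by rw [hs]; positivity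
  have hs2 : 2 ≤ s := by
    have h1 : a * s ≤ 4 / 9 * s := mul_le_mul_of_nonneg_right ha9 hs0.le
    linarith [has]
  have hc32 : Δ * (2 / π) = 3 * a / 2 := by rw [ha]; field_simp; ring
  -- basic facts about the iterates
  have hxsucc : ∀ k : ℕ, x (k + 1) = omegaMap Δ (x k) := by
    intro k
    rw [hx]
    exact Function.iterate_succ_apply' _ _ _
  have hgrow : ∀ k : ℕ, w + a * k ≤ x k := by
    intro k
    induction k with
    | zero => simp [hx]
    | succ k ih =>
      have hak : (0:ℝ) ≤ a * k := by positivity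
      have h1 : 1 < x k := by linarith
      have h2 := omega_ge Δ hΔ0 hΔ1 h1
      rw [← ha] at h2
      rw [hxsucc k]
      push_cast
      linarith
  have hgrow' : ∀ k : ℕ, a * (s + k) ≤ x k := by
    intro k
    have : a * (s + k) = w + a * k := by rw [← has]; ring
    rw [this]; exact hgrow k
  have hxpos : ∀ k : ℕ, 0 < x k := by
    intro k
    have := hgrow k
    have hak : (0:ℝ) ≤ a * k := by positivity
    linarith
  -- threshold
  set k₀ : ℕ := ⌈3 / a⌉₊ with hk₀
  have h4 : ∀ k : ℕ, k₀ ≤ k → 4 ≤ x k := by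
    intro k hk
    have h1 : 3 / a ≤ (k₀ : ℝ) := Nat.le_ceil _
    have h2 : (k₀ : ℝ) ≤ (k : ℝ) := Nat.cast_le.2 hk
    have h3 : 3 ≤ a * k := by
      rw [div_le_iff₀ ha0] at h1
      nlinarith
    have := hgrow k
    linarith
  -- step bounds
  have hstepU : ∀ k : ℕ, k₀ ≤ k → x (k + 1) ≤ x k + a + 3 / 2 * a ^ 2 / x k + 2 / x k ^ 2 := by
    intro k hk
    have h := (omega_step Δ hΔ0 hΔ1 (h4 k hk)).2
    rw [← ha] at h
    rw [hxsucc k]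
    linarith
  have hstepL : ∀ k : ℕ, k₀ ≤ k → x k + a + 3 / 2 * a ^ 2 / x k ≤ x (k + 1) := by
    intro k hk
    have h := (omega_step Δ hΔ0 hΔ1 (h4 k hk)).1
    rw [← ha] at h
    rw [hxsucc k]
    linarith
  -- constants
  set CU : ℝ := max (x k₀ - (a * (s + k₀) + 3 * a / 2 * Real.log (s + k₀))
    + (3 * a + 4 / a ^ 2) / (s + k₀)) 0 with hCU
  have hCU0 : 0 ≤ CU := le_max_right _ _
  have hbaseU : x k₀ ≤ a * (s + k₀) + 3 * a / 2 * Real.log (s + k₀) + CU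
      - (3 * a + 4 / a ^ 2) / (s + k₀) := by
    have h1 : x k₀ - (a * (s + k₀) + 3 * a / 2 * Real.log (s + k₀))
        + (3 * a + 4 / a ^ 2) / (s + k₀) ≤ CU := le_max_left _ _
    linarith
  have hU := invariant_upper a CU s x k₀ ha0 hs2 hgrow' hstepU hbaseU
  have hU' : ∀ k : ℕ, k₀ ≤ k → x k ≤ a * (s + k) + 3 * a / 2 * Real.log (s + k) + CU := by
    intro k hk
    have h1 := hU k hk
    have hsk : (0:ℝ) < s + k := by
      have : (0:ℝ) ≤ k := Nat.cast_nonneg k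
      linarith
    have h2 : 0 ≤ (3 * a + 4 / a ^ 2) / (s + k) := by positivity
    linarith
  set CL : ℝ := x k₀ - (a * (s + k₀) + 3 * a / 2 * Real.log (s + k₀))
    - (27 * a + 9 * CU) / Real.sqrt (s + k₀) with hCL
  have hbaseL : a * (s + k₀) + 3 * a / 2 * Real.log (s + k₀) + CL
      + (27 * a + 9 * CU) / Real.sqrt (s + k₀) ≤ x k₀ := by
    apply le_of_eq; rw [hCL]; ring
  have hL := invariant_lower a CU CL s x k₀ ha0 hs2 hCU0 hxpos hU' hstepL hbaseL
  -- main estimate for k ≥ k₀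
  have hmain : ∀ k : ℕ, k₀ ≤ k → 1 ≤ k →
      |x k - (w + a * ((k : ℝ) - 1) + 3 * a / 2 * Real.log (s + (k : ℝ) - 1))|
        ≤ |CL| + CU + a + 3 * a / 2 := by
    clear hbaseU hbaseL hU hgrow hgrow' hstepU hstepL h4 hxsucc
    clear_value CL CU
    intro k hk hk1
    have hkR : (1:ℝ) ≤ (k : ℝ) := by exact_mod_cast hk1
    set n : ℝ := s + k with hn
    have hn2 : 2 ≤ n := by rw [hn]; have : (0:ℝ) ≤ k := Nat.cast_nonneg k; linarith
    have hm1 : (1:ℝ) ≤ n - 1 := by linarith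
    -- d1 bounds
    have hup := hU' k hk
    have hlow := hL k hk
    have hβn : 0 ≤ (27 * a + 9 * CU) / Real.sqrt n := by positivity
    rw [← hn] at hup hlow
    have hlow' : a * n + 3 * a / 2 * Real.log n + CL ≤ x k := by linarith
    -- log difference bounds
    have hld1 : Real.log (n - 1) ≤ Real.log n :=
      Real.log_le_log (by linarith) (by linarith)
    have hld2 : Real.log n - Real.log (n - 1) ≤ 1 := by
      have h := log_succ_ub (n := n - 1) hm1
      rw [show n - 1 + 1 = n by ring] at h
      have : 1 / (n - 1) ≤ 1 := by
        rw [div_le_one (by linarith)]; linarith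
      linarith
    -- express target
    have htarget : w + a * ((k : ℝ) - 1) + 3 * a / 2 * Real.log (s + (k : ℝ) - 1)
        = a * n - a + 3 * a / 2 * Real.log (n - 1) := by
      rw [hn, ← has]; ring_nf
    rw [htarget]
    clear_value n
    rw [abs_le]
    have e : x k - (a * n - a + 3 * a / 2 * Real.log (n - 1))
        = (x k - (a * n + 3 * a / 2 * Real.log n)) + a
          + 3 * a / 2 * (Real.log n - Real.log (n - 1)) := by ring
    have h2 : 0 ≤ 3 * a / 2 * (Real.log n - Real.log (n - 1)) := by
      apply mul_nonneg (by positivity); linarith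
    have h2' : 3 * a / 2 * (Real.log n - Real.log (n - 1)) ≤ 3 * a / 2 := by
      calc 3 * a / 2 * (Real.log n - Real.log (n - 1)) ≤ 3 * a / 2 * 1 := by
            apply mul_le_mul_of_nonneg_left hld2 (by positivity)
        _ = 3 * a / 2 := by ring
    have h3 : -|CL| ≤ CL := neg_abs_le CL
    have h3' : 0 ≤ |CL| := abs_nonneg CL
    have hd1 : CL ≤ x k - (a * n + 3 * a / 2 * Real.log n) := by linarith
    have hd2 : x k - (a * n + 3 * a / 2 * Real.log n) ≤ CU := by linarith
    constructor
    · linarith [e]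
    · linarith [e]
  -- the finite part
  set F : ℕ → ℝ := fun j => |x j - (w + a * ((j : ℝ) - 1)
    + 3 * a / 2 * Real.log (s + (j : ℝ) - 1))| with hF
  set C₂ : ℝ := ∑ j ∈ Finset.range (k₀ + 1), F j with hC₂
  have hC₂0 : 0 ≤ C₂ := Finset.sum_nonneg fun j _ => abs_nonneg _
  have hsmall : ∀ k : ℕ, k < k₀ + 1 → F k ≤ C₂ := by
    intro k hk
    exact Finset.single_le_sum (f := F) (fun j _ => abs_nonneg _) (Finset.mem_range.2 hk)
  -- final constant
  refine ⟨|CL| + CU + a + 3 * a / 2 + C₂ + 1, by positivity, ?_⟩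
  intro k hk
  rw [hc32]
  show F k ≤ |CL| + CU + a + 3 * a / 2 + C₂ + 1
  by_cases hcase : k₀ ≤ k
  · have h := hmain k hcase hk
    have h2 : F k = |x k - (w + a * ((k : ℝ) - 1)
        + 3 * a / 2 * Real.log (s + (k : ℝ) - 1))| := rfl
    rw [h2]
    linarith
  · have := hsmall k (by omega)
    have h3 : 0 ≤ |CL| := abs_nonneg CL
    linarith
end

section
/- Let $\tau \in \mathbb{R}^n$ with all entries positive, $\underline{\tau} = \min_i \tau_i$, $\overline{\tau} = \max_i \tau_i$, and $c \in [0,1]$. Consider the symmetric matrix $M = (1-c)D_\tau^2 + c\, \tau \tau^T$, where $D_\tau$ is the diagonal matrix with entries $\tau$. Then $\lambda_2(M) \leq (1-c)\overline{\tau}^2$, $\lambda_n(M) \geq (1-c)\underline{\tau}^2$, and $(1+(n-1)c)\underline{\tau}^2 \leq \lambda_1(M) \leq (1+(n-1)c)\overline{\tau}^2$, where eigenvalues are ordered $\lambda_1 \geq \cdots \geq \lambda_n$. -/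
open Matrix

set_option maxHeartbeats 1000000 in
/-- Spectral bounds for `M = (1-c) D_τ² + c ττᵀ`: with eigenvalues `μ` listed in
decreasing order, `μ₂ ≤ (1-c) τ̄²`, `μₙ ≥ (1-c) τ̲²`, and
`(1+(n-1)c) τ̲² ≤ μ₁ ≤ (1+(n-1)c) τ̄²`. -/
theorem rank_one_perturbation_spectrum (n : ℕ) (hn : 2 ≤ n)
    (τ : Fin n → ℝ) (hτ : ∀ i, 0 < τ i) (c : ℝ) (hc : c ∈ Set.Icc (0 : ℝ) 1)
    (M : Matrix (Fin n) (Fin n) ℝ)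
    (hMdef : M = Matrix.of fun i j =>
      (1 - c) * (if i = j then τ i ^ 2 else 0) + c * τ i * τ j)
    (hM : M.IsHermitian)
    (μ : Fin n → ℝ) (hmono : Antitone μ)
    (hperm : ∃ σ : Equiv.Perm (Fin n), ∀ i, μ i = hM.eigenvalues (σ i)) :
    μ ⟨1, by omega⟩ ≤ (1 - c) * (⨆ i, τ i) ^ 2 ∧
    (1 - c) * (⨅ i, τ i) ^ 2 ≤ μ ⟨n - 1, by omega⟩ ∧
    (1 + ((n : ℝ) - 1) * c) * (⨅ i, τ i) ^ 2 ≤ μ ⟨0, by omega⟩ ∧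
    μ ⟨0, by omega⟩ ≤ (1 + ((n : ℝ) - 1) * c) * (⨆ i, τ i) ^ 2 := by
  obtain ⟨σ, hσ⟩ := hperm
  obtain ⟨hc0, hc1⟩ := hc
  have hne : Nonempty (Fin n) := ⟨⟨0, by omega⟩⟩
  set b := hM.eigenvectorBasis with hb
  -- min / max facts
  have hmin_le : ∀ i, (⨅ i, τ i) ≤ τ i := fun i => ciInf_le (Finite.bddBelow_range τ) i
  have hle_max : ∀ i, τ i ≤ ⨆ i, τ i := fun i => le_ciSup (Finite.bddAbove_range τ) i
  have hminpos : 0 < ⨅ i, τ i := by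
    obtain ⟨i0, hi0⟩ := Finite.exists_min τ
    exact lt_of_lt_of_le (hτ i0) (le_ciInf hi0)
  have hmaxpos : 0 < ⨆ i, τ i :=
    lt_of_lt_of_le hminpos (le_trans (hmin_le ⟨0, by omega⟩) (hle_max ⟨0, by omega⟩))
  -- quadratic form of M
  have hQ : ∀ x : Fin n → ℝ, x ⬝ᵥ (M *ᵥ x)
      = (1 - c) * (∑ i, τ i ^ 2 * x i ^ 2) + c * (∑ i, τ i * x i) ^ 2 := by
    intro x
    have hrow : ∀ i, (M *ᵥ x) i
        = (1 - c) * (τ i ^ 2 * x i) + c * τ i * (∑ j, τ j * x j) := by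
      intro i
      simp only [hMdef, mulVec, dotProduct, of_apply, add_mul, ite_mul, zero_mul,
        mul_ite, mul_zero]
      rw [Finset.sum_add_distrib, Finset.sum_ite_eq, Finset.mul_sum]
      simp only [Finset.mem_univ, if_true, mul_assoc]
    have h2 : x ⬝ᵥ (M *ᵥ x)
        = ∑ i, ((1 - c) * (τ i ^ 2 * x i ^ 2) + (c * (∑ j, τ j * x j)) * (τ i * x i)) := by
      simp only [dotProduct, hrow]
      exact Finset.sum_congr rfl (fun i _ => by ring)
    rw [h2, Finset.sum_add_distrib, ← Finset.mul_sum, ← Finset.mul_sum]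
    ring
  -- pointwise orthonormality in dot-product form
  have hdot : ∀ p q : Fin n, (fun j => b p j) ⬝ᵥ (fun j => b q j) = if p = q then 1 else 0 := by
    intro p q
    have h := orthonormal_iff_ite.mp b.orthonormal p q
    simpa [PiLp.inner_apply, RCLike.inner_apply, conj_trivial, dotProduct, mul_comm] using h
  have hunit : ∀ p : Fin n, ∑ i, (b p) i ^ 2 = 1 := by
    intro p
    have h := hdot p p
    rw [if_pos rfl] at h
    simp only [dotProduct] at h
    rw [← h]
    exact Finset.sum_congr rfl fun i _ => by ring
  have hev : ∀ k : Fin n, M *ᵥ (fun j => b (σ k) j) = μ k • (fun j => b (σ k) j) := by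
    intro k
    rw [hσ k]
    exact hM.mulVec_eigenvectorBasis (σ k)
  have hμeq : ∀ k : Fin n, μ k
      = (1 - c) * (∑ i, τ i ^ 2 * (b (σ k)) i ^ 2) + c * (∑ i, τ i * (b (σ k)) i) ^ 2 := by
    intro k
    rw [← hQ (fun j => b (σ k) j), hev k, dotProduct_smul, smul_eq_mul]
    have h := hdot (σ k) (σ k)
    rw [if_pos rfl] at h
    rw [h, mul_one]
  -- all eigenvalues are ≥ (1-c) τmin² and ≤ (1+(n-1)c) τmax²
  have hlow : ∀ k : Fin n, (1 - c) * (⨅ i, τ i) ^ 2 ≤ μ k := by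
    intro k
    rw [hμeq k]
    have h1 : (⨅ i, τ i) ^ 2 = ∑ i, (⨅ i, τ i) ^ 2 * (b (σ k)) i ^ 2 := by
      rw [← Finset.mul_sum, hunit, mul_one]
    have h2 : ∑ i, (⨅ i, τ i) ^ 2 * (b (σ k)) i ^ 2 ≤ ∑ i, τ i ^ 2 * (b (σ k)) i ^ 2 :=
      Finset.sum_le_sum fun i _ => mul_le_mul_of_nonneg_right
        (pow_le_pow_left₀ hminpos.le (hmin_le i) 2) (sq_nonneg _)
    have h3 : (⨅ i, τ i) ^ 2 ≤ ∑ i, τ i ^ 2 * (b (σ k)) i ^ 2 := h1.le.trans h2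
    have h4 := mul_le_mul_of_nonneg_left h3 (by linarith : (0:ℝ) ≤ 1 - c)
    have h5 : 0 ≤ c * (∑ i, τ i * (b (σ k)) i) ^ 2 := mul_nonneg hc0 (sq_nonneg _)
    linarith
  have hhigh : ∀ k : Fin n, μ k ≤ (1 + ((n : ℝ) - 1) * c) * (⨆ i, τ i) ^ 2 := by
    intro k
    rw [hμeq k]
    have hS2 : ∑ i, τ i ^ 2 * (b (σ k)) i ^ 2 ≤ (⨆ i, τ i) ^ 2 := by
      calc ∑ i, τ i ^ 2 * (b (σ k)) i ^ 2 ≤ ∑ i, (⨆ i, τ i) ^ 2 * (b (σ k)) i ^ 2 :=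
            Finset.sum_le_sum fun i _ => mul_le_mul_of_nonneg_right
              (pow_le_pow_left₀ (hτ i).le (hle_max i) 2) (sq_nonneg _)
        _ = (⨆ i, τ i) ^ 2 := by rw [← Finset.mul_sum, hunit, mul_one]
    have hsum : (∑ i : Fin n, τ i ^ 2) ≤ (n : ℝ) * (⨆ i, τ i) ^ 2 := by
      calc (∑ i : Fin n, τ i ^ 2) ≤ ∑ _i : Fin n, (⨆ i, τ i) ^ 2 :=
            Finset.sum_le_sum fun i _ => pow_le_pow_left₀ (hτ i).le (hle_max i) 2
        _ = (n : ℝ) * (⨆ i, τ i) ^ 2 := by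
            simp [Finset.sum_const, Finset.card_univ, nsmul_eq_mul]
    have hCS : (∑ i, τ i * (b (σ k)) i) ^ 2 ≤ (n : ℝ) * (⨆ i, τ i) ^ 2 := by
      have h := Finset.sum_mul_sq_le_sq_mul_sq Finset.univ τ (fun j => b (σ k) j)
      rw [hunit (σ k), mul_one] at h
      exact h.trans hsum
    have h6 := mul_le_mul_of_nonneg_left hS2 (by linarith : (0:ℝ) ≤ 1 - c)
    have h7 := mul_le_mul_of_nonneg_left hCS hc0
    nlinarith [sq_nonneg (⨆ i, τ i)]
  -- ordering facts
  have hμ10 : μ ⟨1, by omega⟩ ≤ μ ⟨0, by omega⟩ := hmono (by simp [Fin.le_def])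
  have hμ0max : ∀ j, hM.eigenvalues j ≤ μ ⟨0, by omega⟩ := by
    intro j
    have h1 : hM.eigenvalues j = μ (σ.symm j) := by rw [hσ, Equiv.apply_symm_apply]
    rw [h1]
    exact hmono (by simp [Fin.le_def])
  -- Rayleigh lower bound for the top eigenvalue
  have hμ0low : (1 + ((n : ℝ) - 1) * c) * (⨅ i, τ i) ^ 2 ≤ μ ⟨0, by omega⟩ := by
    set r : Fin n → ℝ := fun i => b.repr (WithLp.toLp 2 τ : EuclideanSpace ℝ (Fin n)) i with hr
    have hri : ∀ i, r i = τ ⬝ᵥ (fun j => b i j) := by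
      intro i
      rw [hr]
      simp only [b.repr_apply_apply]
      simp [PiLp.inner_apply, RCLike.inner_apply, conj_trivial, dotProduct, mul_comm]
    have hτe : τ = ∑ i, r i • (fun j => b i j) := by
      funext j
      have h := congrArg (fun v : EuclideanSpace ℝ (Fin n) => v j)
        (b.sum_repr (WithLp.toLp 2 τ : EuclideanSpace ℝ (Fin n)))
      simp only [WithLp.ofLp_toLp] at h
      rw [show (∑ i, r i • (fun j => b i j)) j = ∑ i, r i * b i j from by
        rw [Finset.sum_apply]; rfl]
      rw [← h]
      have : ∀ (s : Finset (Fin n)) (f : Fin n → EuclideanSpace ℝ (Fin n)),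
          (∑ i ∈ s, f i) j = ∑ i ∈ s, f i j := by
        intro s f
        induction s using Finset.cons_induction with
        | empty => rfl
        | cons a s ha ih => rw [Finset.sum_cons, Finset.sum_cons, PiLp.add_apply, ih]
      rw [this]
      exact Finset.sum_congr rfl fun i _ => by rw [PiLp.smul_apply, smul_eq_mul]
    have hMτ : M *ᵥ τ = ∑ i, (r i * hM.eigenvalues i) • (fun j => b i j) := by
      calc M *ᵥ τ = M *ᵥ (∑ i, r i • (fun j => b i j)) := by rw [← hτe]
        _ = ∑ i, r i • (M *ᵥ (fun j => b i j)) := by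
            simp only [← Matrix.mulVecLin_apply, map_sum, _root_.map_smul]
        _ = ∑ i, (r i * hM.eigenvalues i) • (fun j => b i j) := by
            refine Finset.sum_congr rfl fun i _ => ?_
            rw [show (M *ᵥ fun j => b i j) = hM.eigenvalues i • (fun j => b i j) from
              hM.mulVec_eigenvectorBasis i, smul_smul, mul_comm]
    have hQτ : τ ⬝ᵥ (M *ᵥ τ) = ∑ i, hM.eigenvalues i * r i ^ 2 := by
      have hds : τ ⬝ᵥ (M *ᵥ τ) = ∑ i, (r i * hM.eigenvalues i) * (∑ j, τ j * b i j) := by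
        rw [hMτ]
        simp only [dotProduct, Finset.sum_apply, Pi.smul_apply, smul_eq_mul, Finset.mul_sum]
        rw [Finset.sum_comm]
        exact Finset.sum_congr rfl fun i _ => Finset.sum_congr rfl fun j _ => by ring
      rw [hds]
      refine Finset.sum_congr rfl fun i _ => ?_
      rw [show ∑ j, τ j * b i j = r i from (hri i).symm]
      ring
    have hPar : ∑ i, r i ^ 2 = ∑ j, τ j ^ 2 := by
      have h := b.repr.inner_map_map (WithLp.toLp 2 τ : EuclideanSpace ℝ (Fin n)) (WithLp.toLp 2 τ : EuclideanSpace ℝ (Fin n))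
      simp only [PiLp.inner_apply, RCLike.inner_apply, conj_trivial, WithLp.ofLp_toLp] at h
      calc ∑ i, r i ^ 2 = ∑ i, r i * r i := Finset.sum_congr rfl fun i _ => sq (r i)
        _ = ∑ j, τ j * τ j := h
        _ = ∑ j, τ j ^ 2 := Finset.sum_congr rfl fun j _ => (sq (τ j)).symm
    have hSpos : 0 < ∑ j, τ j ^ 2 :=
      Finset.sum_pos (fun i _ => pow_pos (hτ i) 2) ⟨⟨0, by omega⟩, Finset.mem_univ _⟩
    have hQτle : τ ⬝ᵥ (M *ᵥ τ) ≤ μ ⟨0, by omega⟩ * ∑ j, τ j ^ 2 := by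
      rw [hQτ, ← hPar, Finset.mul_sum]
      exact Finset.sum_le_sum fun i _ => mul_le_mul_of_nonneg_right (hμ0max i) (sq_nonneg _)
    have hA : (⨅ i, τ i) ^ 2 * (∑ j, τ j ^ 2) ≤ ∑ i, τ i ^ 2 * τ i ^ 2 := by
      rw [Finset.mul_sum]
      exact Finset.sum_le_sum fun i _ => mul_le_mul_of_nonneg_right
        (pow_le_pow_left₀ hminpos.le (hmin_le i) 2) (sq_nonneg _)
    have hB : (∑ i, τ i * τ i) = ∑ j, τ j ^ 2 := Finset.sum_congr rfl fun i _ => (sq (τ i)).symm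
    have hC : (n : ℝ) * (⨅ i, τ i) ^ 2 ≤ ∑ j, τ j ^ 2 := by
      calc (n : ℝ) * (⨅ i, τ i) ^ 2 = ∑ _j : Fin n, (⨅ i, τ i) ^ 2 := by
            simp [Finset.sum_const, Finset.card_univ, nsmul_eq_mul]
        _ ≤ ∑ j, τ j ^ 2 :=
            Finset.sum_le_sum fun i _ => pow_le_pow_left₀ hminpos.le (hmin_le i) 2
    have hQτge : (1 + ((n : ℝ) - 1) * c) * (⨅ i, τ i) ^ 2 * (∑ j, τ j ^ 2)
        ≤ τ ⬝ᵥ (M *ᵥ τ) := by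
      rw [hQ τ, hB]
      have h1 := mul_le_mul_of_nonneg_left hA (by linarith : (0:ℝ) ≤ 1 - c)
      have h2 : c * ((n : ℝ) * (⨅ i, τ i) ^ 2) * (∑ j, τ j ^ 2)
          ≤ c * (∑ j, τ j ^ 2) * (∑ j, τ j ^ 2) :=
        mul_le_mul_of_nonneg_right (mul_le_mul_of_nonneg_left hC hc0) hSpos.le
      nlinarith
    have := hQτge.trans hQτle
    exact le_of_mul_le_mul_right this hSpos
  -- second eigenvalue bound
  have hμ1high : μ ⟨1, by omega⟩ ≤ (1 - c) * (⨆ i, τ i) ^ 2 := by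
    have key : ∀ (v1 v2 : Fin n → ℝ) (μ0 μ1 : ℝ),
        M *ᵥ v1 = μ0 • v1 → M *ᵥ v2 = μ1 • v2 →
        v1 ⬝ᵥ v1 = 1 → v2 ⬝ᵥ v2 = 1 → v1 ⬝ᵥ v2 = 0 → v2 ⬝ᵥ v1 = 0 →
        μ1 ≤ μ0 →
        ∀ a d : ℝ, (a ≠ 0 ∨ d ≠ 0) → (∑ i, τ i * (a * v1 i + d * v2 i)) = 0 →
        μ1 ≤ (1 - c) * (⨆ i, τ i) ^ 2 := by
      intro v1 v2 μ0 μ1 hv1 hv2 h11 h22 h12 h21 hμle a d h0 hT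
      set x : Fin n → ℝ := fun i => a * v1 i + d * v2 i with hx
      have hxad : x = a • v1 + d • v2 := by funext i; simp [hx, smul_eq_mul]
      have hMx : M *ᵥ x = (a * μ0) • v1 + (d * μ1) • v2 := by
        rw [hxad, mulVec_add, mulVec_smul, mulVec_smul, hv1, hv2, smul_smul, smul_smul]
      have hQx : x ⬝ᵥ (M *ᵥ x) = a ^ 2 * μ0 + d ^ 2 * μ1 := by
        rw [hMx, hxad]
        simp only [add_dotProduct, dotProduct_add, smul_dotProduct, dotProduct_smul,
          smul_eq_mul, h11, h22, h12, h21]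
        ring
      have hNx : ∑ i, x i ^ 2 = a ^ 2 + d ^ 2 := by
        have h1 : ∑ i, x i ^ 2 = x ⬝ᵥ x := by
          simp only [dotProduct]
          exact Finset.sum_congr rfl fun i _ => sq (x i)
        rw [h1, hxad]
        simp only [add_dotProduct, dotProduct_add, smul_dotProduct, dotProduct_smul,
          smul_eq_mul, h11, h22, h12, h21]
        ring
      have hS2x : ∑ i, τ i ^ 2 * x i ^ 2 ≤ (⨆ i, τ i) ^ 2 * (a ^ 2 + d ^ 2) := by
        calc ∑ i, τ i ^ 2 * x i ^ 2 ≤ ∑ i, (⨆ i, τ i) ^ 2 * x i ^ 2 :=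
              Finset.sum_le_sum fun i _ => mul_le_mul_of_nonneg_right
                (pow_le_pow_left₀ (hτ i).le (hle_max i) 2) (sq_nonneg _)
          _ = (⨆ i, τ i) ^ 2 * (a ^ 2 + d ^ 2) := by rw [← Finset.mul_sum, hNx]
      have hQform := hQ x
      rw [hQx] at hQform
      rw [show (∑ i, τ i * x i) = 0 from hT] at hQform
      have hpos : 0 < a ^ 2 + d ^ 2 := by
        rcases h0 with h | h
        · have h1 : 0 < a ^ 2 := lt_of_le_of_ne (sq_nonneg a) (Ne.symm (pow_ne_zero 2 h))
          nlinarith [sq_nonneg d]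
        · have h1 : 0 < d ^ 2 := lt_of_le_of_ne (sq_nonneg d) (Ne.symm (pow_ne_zero 2 h))
          nlinarith [sq_nonneg a]
      have h8 := mul_le_mul_of_nonneg_left hS2x (by linarith : (0:ℝ) ≤ 1 - c)
      have h9 := mul_le_mul_of_nonneg_left hμle (sq_nonneg a)
      refine le_of_mul_le_mul_right ?_ hpos
      calc μ1 * (a ^ 2 + d ^ 2) = a ^ 2 * μ1 + d ^ 2 * μ1 := by ring
        _ ≤ a ^ 2 * μ0 + d ^ 2 * μ1 := by linarith
        _ = (1 - c) * (∑ i, τ i ^ 2 * x i ^ 2) + c * 0 ^ 2 := hQform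
        _ ≤ (1 - c) * ((⨆ i, τ i) ^ 2 * (a ^ 2 + d ^ 2)) := by linarith
        _ = (1 - c) * (⨆ i, τ i) ^ 2 * (a ^ 2 + d ^ 2) := by ring
    have hpq : σ ⟨0, by omega⟩ ≠ σ (⟨1, by omega⟩ : Fin n) := by
      intro h
      have h2 := σ.injective h
      exact absurd (congrArg Fin.val h2) (by simp)
    have hd11 : (fun j => b (σ ⟨0, by omega⟩) j) ⬝ᵥ (fun j => b (σ ⟨0, by omega⟩) j) = 1 := by
      rw [hdot, if_pos rfl]
    have hd22 : (fun j => b (σ ⟨1, by omega⟩) j) ⬝ᵥ (fun j => b (σ ⟨1, by omega⟩) j) = 1 := by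
      rw [hdot, if_pos rfl]
    have hd12 : (fun j => b (σ ⟨0, by omega⟩) j) ⬝ᵥ (fun j => b (σ ⟨1, by omega⟩) j) = 0 := by
      rw [hdot, if_neg hpq]
    have hd21 : (fun j => b (σ ⟨1, by omega⟩) j) ⬝ᵥ (fun j => b (σ ⟨0, by omega⟩) j) = 0 := by
      rw [hdot, if_neg (Ne.symm hpq)]
    have k1 := key (fun j => b (σ ⟨0, by omega⟩) j) (fun j => b (σ ⟨1, by omega⟩) j)
      (μ ⟨0, by omega⟩) (μ ⟨1, by omega⟩) (hev ⟨0, by omega⟩) (hev ⟨1, by omega⟩)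
      hd11 hd22 hd12 hd21 hμ10
    by_cases h1 : (∑ i, τ i * b (σ ⟨0, by omega⟩) i) = 0
    · refine k1 1 0 (Or.inl one_ne_zero) ?_
      simpa using h1
    · refine k1 (∑ i, τ i * b (σ ⟨1, by omega⟩) i) (-(∑ i, τ i * b (σ ⟨0, by omega⟩) i))
        (Or.inr (by simpa using h1)) ?_
      have hsplit : ∑ i, τ i * ((∑ i, τ i * b (σ ⟨1, by omega⟩) i) * b (σ ⟨0, by omega⟩) i
            + (-(∑ i, τ i * b (σ ⟨0, by omega⟩) i)) * b (σ ⟨1, by omega⟩) i)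
          = (∑ i, τ i * b (σ ⟨1, by omega⟩) i) * (∑ i, τ i * b (σ ⟨0, by omega⟩) i)
            + (-(∑ i, τ i * b (σ ⟨0, by omega⟩) i)) * (∑ i, τ i * b (σ ⟨1, by omega⟩) i) := by
        rw [Finset.mul_sum, Finset.mul_sum, ← Finset.sum_add_distrib]
        exact Finset.sum_congr rfl fun i _ => by ring
      rw [hsplit]
      ring
  exact ⟨hμ1high, hlow _, hμ0low, hhigh _⟩
end

section
/- Let $n \geq 2$, let $A \in \mathbb{R}^{n\times n}$ be symmetric with zero diagonal and all off-diagonal entries equal to values $A_{ij} = g(w_{ij})$ where $g$ is a nonnegative increasing convex function on an interval containing all $w_{ij}$. Let $y \in \mathbb{R}^n$ with $\langle y, \mathbbm{1}_n \rangle = 0$ and $\|y\| = 1$, and suppose $\widetilde{W}$ satisfies $-\sum_{i \neq j} y_i y_j \max\{w_{ij} - w, 0\} \leq \max\{\widetilde{W} - w, 0\}$ for all $w \in \{w_{ij}\} \cup \{\widetilde{W}\}$. Then $-\langle y, A y\rangle \leq g(\widetilde{W})$. -/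
open Matrix Finset

lemma rep_lemma (g : ℝ → ℝ) (s : Set ℝ)
    (hgnn : ∀ x ∈ s, 0 ≤ g x) (hgmono : MonotoneOn g s) (hgconv : ConvexOn ℝ s g)
    (T : Finset ℝ) (hTs : ↑T ⊆ s) :
    ∃ a : ℝ, ∃ c : ℝ → ℝ, (∀ t ∈ T, 0 ≤ c t) ∧
      (∀ x ∈ T, g x = a + ∑ t ∈ T, c t * max (x - t) 0) ∧
      (∀ x ∈ s, (∀ t ∈ T, t ≤ x) → a + ∑ t ∈ T, c t * max (x - t) 0 ≤ g x) := by
  induction T using Finset.induction_on_max with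
  | empty =>
      refine ⟨0, fun _ => 0, by simp, by simp, ?_⟩
      intro x hx _
      simpa using hgnn x hx
  | insert M T' hlt ih =>
      have hMs : M ∈ s := hTs (by simp)
      have hT's : ↑T' ⊆ s := fun t ht => hTs (by simp [ht])
      have hMnotin : M ∉ T' := fun h => lt_irrefl M (hlt M h)
      rcases T'.eq_empty_or_nonempty with rfl | hne
      · refine ⟨g M, fun _ => 0, by simp, by simp, ?_⟩
        intro x hx hle
        simpa using hgmono hMs hx (hle M (by simp))
      · obtain ⟨a, c, hc0, hceq, hcle⟩ := ih hT's
        set M' : ℝ := T'.max' hne with hM'def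
        have hM'T : M' ∈ T' := T'.max'_mem hne
        have hM's : M' ∈ s := hT's hM'T
        have hM'M : M' < M := hlt M' hM'T
        have hle' : ∀ t ∈ T', t ≤ M' := fun t ht => T'.le_max' t ht
        set S : ℝ := ∑ t ∈ T', c t with hSdef
        have hlin : ∀ x : ℝ, M' ≤ x →
            ∑ t ∈ T', c t * max (x - t) 0 = ∑ t ∈ T', c t * max (M' - t) 0 + S * (x - M') := by
          intro x hx
          rw [hSdef, Finset.sum_mul, ← Finset.sum_add_distrib]
          refine Finset.sum_congr rfl fun t ht => ?_
          have h1 : t ≤ M' := hle' t ht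
          rw [max_eq_left (by linarith), max_eq_left (by linarith)]
          ring
        have hgM' : g M' = a + ∑ t ∈ T', c t * max (M' - t) 0 := hceq M' hM'T
        have hrepM : a + ∑ t ∈ T', c t * max (M - t) 0 = g M' + S * (M - M') := by
          rw [hlin M hM'M.le]; linarith
        have hrepleM : g M' + S * (M - M') ≤ g M := by
          rw [← hrepM]; exact hcle M hMs (fun t ht => (hle' t ht).trans hM'M.le)
        have hMM' : (0:ℝ) < M - M' := by linarith
        set δ : ℝ := (g M - g M' - S * (M - M')) / (M - M') with hδdef
        have hδ0 : 0 ≤ δ := div_nonneg (by linarith) hMM'.le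
        have hgMeq : g M = g M' + S * (M - M') + δ * (M - M') := by
          have hδmul : δ * (M - M') = g M - g M' - S * (M - M') := by
            rw [hδdef]; field_simp
          linarith
        refine ⟨a, fun t => if t = M then 0 else if t = M' then c M' + δ else c t,
          ?_, ?_, ?_⟩
        · intro t ht
          dsimp only
          by_cases h1 : t = M
          · simp [h1]
          · have ht' : t ∈ T' := by
              rcases Finset.mem_insert.mp ht with h | h
              · exact absurd h h1
              · exact h
            rw [if_neg h1]
            by_cases h2 : t = M'
            · rw [if_pos h2]
              have := hc0 M' hM'T
              linarith
            · rw [if_neg h2]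
              exact hc0 t ht'
        all_goals
          have hsum : ∀ x : ℝ,
              ∑ t ∈ insert M T', (if t = M then 0 else if t = M' then c M' + δ else c t)
                * max (x - t) 0
              = ∑ t ∈ T', c t * max (x - t) 0 + δ * max (x - M') 0 := by
            intro x
            rw [Finset.sum_insert hMnotin, if_pos rfl, zero_mul, zero_add]
            have hcong : ∀ t ∈ T', (if t = M then 0 else if t = M' then c M' + δ else c t)
                * max (x - t) 0
                = c t * max (x - t) 0 + (if t = M' then δ * max (x - M') 0 else 0) := by
              intro t ht
              have htM : t ≠ M := fun h => hMnotin (h ▸ ht)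
              by_cases h2 : t = M'
              · subst h2; simp [htM]; ring
              · simp [htM, h2]
            rw [Finset.sum_congr rfl hcong, Finset.sum_add_distrib,
              Finset.sum_ite_eq' T' M' (fun _ => δ * max (x - M') 0), if_pos hM'T]
        · intro x hx
          rw [hsum x]
          rcases Finset.mem_insert.mp hx with rfl | hx'
          · rw [max_eq_left hMM'.le, hlin x hM'M.le]
            linarith
          · have hxM' : x ≤ M' := hle' x hx'
            rw [max_eq_right (by linarith), mul_zero, add_zero]
            exact hceq x hx'
        · intro x hx hle
          rw [hsum x]
          have hMx : M ≤ x := hle M (by simp)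
          have hM'x : M' ≤ x := hM'M.le.trans hMx
          rw [hlin x hM'x, max_eq_left (by linarith)]
          have key : g M' + S * (x - M') + δ * (x - M') ≤ g x := by
            rcases eq_or_lt_of_le hMx with rfl | hMx'
            · linarith
            · have hxM' : (0:ℝ) < x - M' := by linarith
              have hslope : (g M - g M') / (M - M') ≤ (g x - g M') / (x - M') :=
                hgconv.secant_mono_aux2 hM's hx hM'M hMx'
              have hSδ : (g M - g M') / (M - M') = S + δ := by
                rw [hgMeq]; field_simp; ring
              rw [hSδ, le_div_iff₀ hxM'] at hslope
              nlinarith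
          linarith

/-- Majorization-type transfer principle (Horváth 2023, Theorem 9(a₂) special case):
if `A` is symmetric with zero diagonal and off-diagonal entries `A i j = g (w i j)`
for a nonnegative increasing convex `g` on an interval `s` containing all `w i j`
and `W̃`, and `y ⊥ 𝟙` is a unit vector such that
`-∑_{i≠j} yᵢ yⱼ max(wᵢⱼ - w₀, 0) ≤ max(W̃ - w₀, 0)` for every `w₀` among the `wᵢⱼ`
and `W̃`, then `-⟨y, A y⟩ ≤ g(W̃)`. -/
theorem transfer_principle (n : ℕ) (hn : 2 ≤ n)
    (A : Matrix (Fin n) (Fin n) ℝ) (hA : A.IsSymm)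
    (w : Fin n → Fin n → ℝ) (g : ℝ → ℝ) (s : Set ℝ)
    (hs : s.OrdConnected)
    (hgnn : ∀ x ∈ s, 0 ≤ g x) (hgmono : MonotoneOn g s) (hgconv : ConvexOn ℝ s g)
    (hdiag : ∀ i, A i i = 0)
    (hoff : ∀ i j, i ≠ j → A i j = g (w i j))
    (hws : ∀ i j, i ≠ j → w i j ∈ s)
    (y : Fin n → ℝ) (hy1 : ∑ i, y i = 0) (hy2 : ∑ i, y i ^ 2 = 1)
    (W : ℝ) (hWs : W ∈ s)
    (hW : ∀ w₀ : ℝ, ((∃ i j, i ≠ j ∧ w₀ = w i j) ∨ w₀ = W) →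
      -(∑ i, ∑ j, if i = j then 0 else y i * y j * max (w i j - w₀) 0) ≤
        max (W - w₀) 0) :
    -(y ⬝ᵥ A.mulVec y) ≤ g W := by
  classical
  set T : Finset ℝ :=
    ((Finset.univ ×ˢ Finset.univ).filter fun p : Fin n × Fin n => p.1 ≠ p.2).image
      (fun p => w p.1 p.2) ∪ {W} with hTdef
  have hWT : W ∈ T := by simp [hTdef]
  have hwT : ∀ i j : Fin n, i ≠ j → w i j ∈ T := by
    intro i j hij
    simp only [hTdef, Finset.mem_union, Finset.mem_image, Finset.mem_filter,
      Finset.mem_product, Finset.mem_univ, true_and, Finset.mem_singleton]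
    exact Or.inl ⟨(i, j), hij, rfl⟩
  have hmem : ∀ t ∈ T, (∃ i j : Fin n, i ≠ j ∧ t = w i j) ∨ t = W := by
    intro t ht
    simp only [hTdef, Finset.mem_union, Finset.mem_image, Finset.mem_filter,
      Finset.mem_product, Finset.mem_univ, true_and, Finset.mem_singleton] at ht
    rcases ht with ⟨p, hp, rfl⟩ | rfl
    · exact Or.inl ⟨p.1, p.2, hp, rfl⟩
    · exact Or.inr rfl
  have hTs : ↑T ⊆ s := by
    intro t ht
    rcases hmem t ht with ⟨i, j, hij, rfl⟩ | rfl
    · exact hws i j hij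
    · exact hWs
  obtain ⟨a, c, hc0, hceq, _⟩ := rep_lemma g s hgnn hgmono hgconv T hTs
  -- expand the quadratic form
  have hAexp : y ⬝ᵥ A.mulVec y
      = ∑ i, ∑ j, (if i = j then 0 else y i * y j * g (w i j)) := by
    simp only [dotProduct, Matrix.mulVec, dotProduct, Finset.mul_sum]
    refine Finset.sum_congr rfl fun i _ => Finset.sum_congr rfl fun j _ => ?_
    by_cases h : i = j
    · simp [h, hdiag]
    · rw [if_neg h, hoff i j h]; ring
  -- ∑_{i≠j} y_i y_j = -1
  have hrow : ∀ (f : Fin n → ℝ) (i : Fin n),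
      ∑ j, (if i = j then 0 else f j) = (∑ j, f j) - f i := by
    intro f i
    have h1 : ∀ j : Fin n, (if i = j then 0 else f j)
        = f j - (if i = j then f j else 0) := by
      intro j; by_cases h : i = j <;> simp [h]
    rw [Finset.sum_congr rfl (fun j _ => h1 j), Finset.sum_sub_distrib,
      Finset.sum_ite_eq Finset.univ i f, if_pos (Finset.mem_univ i)]
  have hQ : ∑ i, ∑ j, (if i = j then 0 else y i * y j) = -1 := by
    have h1 : ∀ i : Fin n, ∑ j, (if i = j then 0 else y i * y j)
        = y i * (∑ j, y j) - y i ^ 2 := by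
      intro i
      rw [hrow (fun j => y i * y j) i, Finset.mul_sum]
      ring_nf
    rw [Finset.sum_congr rfl (fun i _ => h1 i), Finset.sum_sub_distrib, hy2, hy1]
    simp
  -- per-term expansion via the representation
  have hterm : ∀ i j : Fin n,
      (if i = j then 0 else y i * y j * g (w i j))
      = (if i = j then 0 else y i * y j) * a
        + ∑ t ∈ T, c t * (if i = j then 0 else y i * y j * max (w i j - t) 0) := by
    intro i j
    by_cases h : i = j
    · simp [h]
    · rw [if_neg h, hceq (w i j) (hwT i j h), mul_add, Finset.mul_sum]
      congr 1
      · rw [if_neg h]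
      · refine Finset.sum_congr rfl fun t _ => ?_
        rw [if_neg h]; ring
  have hsplit : ∑ i, ∑ j, (if i = j then 0 else y i * y j * g (w i j))
      = (-1) * a + ∑ t ∈ T, c t
          * ∑ i, ∑ j, (if i = j then 0 else y i * y j * max (w i j - t) 0) := by
    calc ∑ i, ∑ j, (if i = j then 0 else y i * y j * g (w i j))
        = ∑ i, ∑ j, ((if i = j then 0 else y i * y j) * a
            + ∑ t ∈ T, c t * (if i = j then 0 else y i * y j * max (w i j - t) 0)) :=
          Finset.sum_congr rfl fun i _ => Finset.sum_congr rfl fun j _ => hterm i j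
      _ = (∑ i, ∑ j, (if i = j then 0 else y i * y j)) * a
            + ∑ i, ∑ j, ∑ t ∈ T, c t
              * (if i = j then 0 else y i * y j * max (w i j - t) 0) := by
          rw [Finset.sum_mul, ← Finset.sum_add_distrib]
          refine Finset.sum_congr rfl fun i _ => ?_
          rw [Finset.sum_mul, ← Finset.sum_add_distrib]
      _ = (-1) * a + ∑ t ∈ T, c t
            * ∑ i, ∑ j, (if i = j then 0 else y i * y j * max (w i j - t) 0) := by
          rw [hQ]
          congr 1
          calc ∑ i, ∑ j, ∑ t ∈ T, c t
                * (if i = j then 0 else y i * y j * max (w i j - t) 0)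
              = ∑ i, ∑ t ∈ T, ∑ j, c t
                * (if i = j then 0 else y i * y j * max (w i j - t) 0) :=
                Finset.sum_congr rfl fun i _ => Finset.sum_comm
            _ = ∑ t ∈ T, ∑ i, ∑ j, c t
                * (if i = j then 0 else y i * y j * max (w i j - t) 0) :=
                Finset.sum_comm
            _ = ∑ t ∈ T, c t * ∑ i, ∑ j,
                (if i = j then 0 else y i * y j * max (w i j - t) 0) := by
                refine Finset.sum_congr rfl fun t _ => ?_
                rw [Finset.mul_sum]
                exact Finset.sum_congr rfl fun i _ => (Finset.mul_sum _ _ _).symm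
  have hbound : ∀ t ∈ T,
      c t * (-(∑ i, ∑ j, (if i = j then 0 else y i * y j * max (w i j - t) 0)))
        ≤ c t * max (W - t) 0 :=
    fun t ht => mul_le_mul_of_nonneg_left (hW t (hmem t ht)) (hc0 t ht)
  calc -(y ⬝ᵥ A.mulVec y)
      = a + ∑ t ∈ T, c t
          * (-(∑ i, ∑ j, (if i = j then 0 else y i * y j * max (w i j - t) 0))) := by
        rw [hAexp, hsplit]
        simp only [mul_neg]
        rw [Finset.sum_neg_distrib]
        ring
    _ ≤ a + ∑ t ∈ T, c t * max (W - t) 0 :=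
        add_le_add_right (Finset.sum_le_sum hbound) a
    _ = g W := (hceq W hWT).symm
end
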